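/- arXiv:0909.0471 — 10 statements merged into one kernel-verified Lean document; each statement's English description precedes it below -/
import Mathlib

section
/- In any cover of the 2d facets of the d-cube by d sets (each set a union of facets), at least one set contains a pair of antipodal (d-2)-faces (ridges). -/
namespace Cube

/-- A face of the `d`-cube: `none` = varying coordinate (X), `some b` = fixed at `b`. -/
abbrev Face (d : ℕ) := Fin d → Option Bool

/-- `F` is a `k`-face: exactly `k` varying coordinates. -/
def IsKFace {d : ℕ} (F : Face d) (k : ℕ) : Prop :=
  (Finset.univ.filter fun i => F i = none).card = k

/-- `G` is a subface of `F`: `G` agrees with every fixed coordinate of `F`. -/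
def Subface {d : ℕ} (G F : Face d) : Prop := ∀ i b, F i = some b → G i = some b

/-- Antipodal faces: same varying positions, opposite fixed values. -/
def Antipodal {d : ℕ} (F G : Face d) : Prop := ∀ i, G i = (F i).map (!·)

abbrev Vertex (d : ℕ) := Fin d → Bool

/-- The vertex `v` lies on the face `F`. -/
def VMem {d : ℕ} (v : Vertex d) (F : Face d) : Prop := ∀ i b, F i = some b → v i = b

/-- A set of faces contains the face `G` if `G` is a subface of one of its members. -/
def SetContains {d : ℕ} (A : Set (Face d)) (G : Face d) : Prop := ∃ F ∈ A, Subface G F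

end Cube

open Cube

/-- The facet fixing coordinate `i` to `b`. -/
def ft {d : ℕ} (i : Fin d) (b : Bool) : Face d := fun j => if j = i then some b else none

/-- The ridge fixing `i` to `b` and `j` to `c`. -/
def rg {d : ℕ} (i : Fin d) (b : Bool) (j : Fin d) (c : Bool) : Face d :=
  fun k => if k = i then some b else if k = j then some c else none

lemma ft_isKFace {d : ℕ} (i : Fin d) (b : Bool) : IsKFace (ft i b) (d - 1) := by
  unfold IsKFace ft
  have h : (Finset.univ.filter fun j : Fin d => (if j = i then some b else none) = none)
      = ({i} : Finset (Fin d))ᶜ := by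
    ext j
    by_cases h : j = i <;> simp [h]
  rw [h, Finset.card_compl]
  simp

lemma rg_isKFace {d : ℕ} {i j : Fin d} (hij : i ≠ j) (b c : Bool) :
    IsKFace (rg i b j c) (d - 2) := by
  unfold IsKFace rg
  have h : (Finset.univ.filter fun k : Fin d =>
      (if k = i then some b else if k = j then some c else none) = none)
      = ({i, j} : Finset (Fin d))ᶜ := by
    ext k
    by_cases h1 : k = i
    · simp [h1]
    · by_cases h2 : k = j <;> simp [h1, h2, Ne.symm hij]
  rw [h, Finset.card_compl, Finset.card_insert_of_notMem (by simpa using hij)]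
  simp

lemma rg_sub_left {d : ℕ} (i : Fin d) (b : Bool) (j : Fin d) (c : Bool) :
    Subface (rg i b j c) (ft i b) := by
  intro k b' hk
  unfold ft at hk
  by_cases h : k = i
  · simp [h] at hk; simp [rg, h, hk]
  · simp [h] at hk

lemma rg_sub_right {d : ℕ} {i j : Fin d} (hij : i ≠ j) (b c : Bool) :
    Subface (rg i b j c) (ft j c) := by
  intro k b' hk
  unfold ft at hk
  by_cases h : k = j
  · simp [h] at hk; simp [rg, h, hij.symm, hk]
  · simp [h] at hk

lemma rg_antipodal {d : ℕ} {i j : Fin d} (hij : i ≠ j) (b c : Bool) :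
    Antipodal (rg i b j c) (rg i (!b) j (!c)) := by
  intro k
  by_cases h1 : k = i
  · simp [rg, h1]
  · by_cases h2 : k = j <;> simp [rg, h1, h2, Ne.symm hij]

/-- any `d`-set facet cover of `C^d` has a set containing a pair of
antipodal ridges ((d-2)-faces). -/
theorem facet_cover_antipodal_ridges (d : ℕ) (hd : 1 ≤ d)
    (A : Fin d → Set (Face d))
    (hfacets : ∀ i F, F ∈ A i → IsKFace F (d - 1))
    (hcover : ∀ F : Face d, IsKFace F (d - 1) → ∃ i, F ∈ A i) :
    ∃ i, ∃ R R' : Face d, IsKFace R (d - 2) ∧ Antipodal R R' ∧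
      SetContains (A i) R ∧ SetContains (A i) R' := by
  classical
  have hch : ∀ p : Fin d × Bool, ∃ n, ft p.1 p.2 ∈ A n := fun p =>
    hcover _ (ft_isKFace p.1 p.2)
  choose f hf using hch
  have hcard : Fintype.card (Fin d) < Fintype.card (Fin d × Bool) := by
    simp; omega
  obtain ⟨p, q, hpq, hfe⟩ := Fintype.exists_ne_map_eq_of_card_lt f hcard
  by_cases hij : p.1 = q.1
  · -- same coordinate, opposite bits
    have hb : p.2 ≠ q.2 := by
      intro h; exact hpq (Prod.ext hij h)
    have hq2 : q.2 = !p.2 := by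
      cases hb' : p.2 <;> cases hb'' : q.2 <;> simp_all
    rcases Nat.lt_or_ge d 2 with hd1 | hd2
    · -- d = 1 : ridges are facets
      have hd1 : d = 1 := by omega
      refine ⟨f p, ft p.1 p.2, ft q.1 q.2, ?_, ?_, ?_, ?_⟩
      · have := ft_isKFace p.1 p.2
        have : IsKFace (ft p.1 p.2) (d - 1) := this
        simpa [hd1] using this
      · intro k
        have hk : k = p.1 := by omega
        simp [ft, hk, hij.symm, hq2]
      · exact ⟨_, hf p, fun i b h => h⟩
      · exact ⟨_, hfe ▸ hf q, fun i b h => h⟩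
    · -- d ≥ 2: pick another coordinate
      have : 1 < Fintype.card (Fin d) := by simp; omega
      obtain ⟨j, hj⟩ := Fintype.exists_ne_of_one_lt_card this p.1
      refine ⟨f p, rg p.1 p.2 j true, rg p.1 (!p.2) j false, rg_isKFace (Ne.symm hj) _ _,
        by simpa using rg_antipodal (Ne.symm hj) p.2 true, ?_, ?_⟩
      · exact ⟨_, hf p, rg_sub_left _ _ _ _⟩
      · refine ⟨ft q.1 q.2, hfe ▸ hf q, ?_⟩
        rw [hij, hq2] at *
        exact rg_sub_left _ _ _ _
  · -- different coordinates
    refine ⟨f p, rg p.1 p.2 q.1 (!q.2), rg p.1 (!p.2) q.1 q.2, rg_isKFace hij _ _,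
      by simpa using rg_antipodal hij p.2 (!q.2), ?_, ?_⟩
    · exact ⟨_, hf p, rg_sub_left _ _ _ _⟩
    · exact ⟨_, hfe ▸ hf q, rg_sub_right hij _ _⟩
end

section
/- If a set A of edges of the 3-cube has at least four edges and no two vertices lying on edges of A are antipodal, then A is exactly the set of four edges bounding some 2-face of the 3-cube. -/
open Cube

section Aux

instance {d k} (F : Face d) : Decidable (IsKFace F k) := by unfold IsKFace; infer_instance
instance {d} (G F : Face d) : Decidable (Subface G F) := by unfold Subface; infer_instance
instance {d} (v : Vertex d) (F : Face d) : Decidable (VMem v F) := by unfold VMem; infer_instance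

/-- The 12 edges of the 3-cube. -/
def EE : Fin 12 → Face 3 :=
  ![![none, some false, some false], ![none, some false, some true],
    ![none, some true, some false], ![none, some true, some true],
    ![some false, none, some false], ![some false, none, some true],
    ![some true, none, some false], ![some true, none, some true],
    ![some false, some false, none], ![some false, some true, none],
    ![some true, some false, none], ![some true, some true, none]]

/-- The 6 two-dimensional faces of the 3-cube. -/
def FF : Fin 6 → Face 3 :=
  ![![some false, none, none], ![some true, none, none],
    ![none, some false, none], ![none, some true, none],
    ![none, none, some false], ![none, none, some true]]

/-- The 8 vertices of the 3-cube. -/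
def vtx : Fin 8 → Vertex 3 :=
  ![![false, false, false], ![true, false, false], ![false, true, false], ![true, true, false],
    ![false, false, true], ![true, false, true], ![false, true, true], ![true, true, true]]

/-- Edge-vertex incidence table. -/
def inc : Fin 12 → Fin 8 → Bool :=
  ![![true, true, false, false, false, false, false, false],
    ![false, false, false, false, true, true, false, false],
    ![false, false, true, true, false, false, false, false],
    ![false, false, false, false, false, false, true, true],
    ![true, false, true, false, false, false, false, false],
    ![false, false, false, false, true, false, true, false],
    ![false, true, false, true, false, false, false, false],
    ![false, false, false, false, false, true, false, true],
    ![true, false, false, false, true, false, false, false],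
    ![false, false, true, false, false, false, true, false],
    ![false, true, false, false, false, true, false, false],
    ![false, false, false, true, false, false, false, true]]

/-- Antipode on vertex indices. -/
def aidx : Fin 8 → Fin 8 := ![7, 6, 5, 4, 3, 2, 1, 0]

lemma edge_rep : ∀ e : Face 3, IsKFace e 1 → ∃ j : Fin 12, e = EE j := by decide

lemma EE_inj : Function.Injective EE := by decide

lemma inc_spec : ∀ j w, inc j w = true → VMem (vtx w) (EE j) := by decide

lemma aidx_spec : ∀ w, (fun i => ! vtx w i) = vtx (aidx w) := by decide

/-- The core combinatorial fact, in purely Boolean form.  `b j` records whether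
edge `j` belongs to the set.  The four hypotheses after the cardinality bound say
that no antipodal pair of vertices is covered; the conclusion lists the six
boundaries of 2-faces. -/
abbrev P12 (b0 b1 b2 b3 b4 b5 b6 b7 b8 b9 b10 b11 : Bool) : Prop :=
  4 ≤ List.countP (fun b => b) [b0,b1,b2,b3,b4,b5,b6,b7,b8,b9,b10,b11] →
  ((b0||b4||b8) && (b3||b7||b11)) = false →
  ((b0||b6||b10) && (b3||b5||b9)) = false →
  ((b2||b4||b9) && (b1||b7||b10)) = false →
  ((b2||b6||b11) && (b1||b5||b8)) = false →
  [b0,b1,b2,b3,b4,b5,b6,b7,b8,b9,b10,b11] = [false,false,false,false,true,true,false,false,true,true,false,false] ∨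
  [b0,b1,b2,b3,b4,b5,b6,b7,b8,b9,b10,b11] = [false,false,false,false,false,false,true,true,false,false,true,true] ∨
  [b0,b1,b2,b3,b4,b5,b6,b7,b8,b9,b10,b11] = [true,true,false,false,false,false,false,false,true,false,true,false] ∨
  [b0,b1,b2,b3,b4,b5,b6,b7,b8,b9,b10,b11] = [false,false,true,true,false,false,false,false,false,true,false,true] ∨
  [b0,b1,b2,b3,b4,b5,b6,b7,b8,b9,b10,b11] = [true,false,true,false,true,false,true,false,false,false,false,false] ∨
  [b0,b1,b2,b3,b4,b5,b6,b7,b8,b9,b10,b11] = [false,true,false,true,false,true,false,true,false,false,false,false]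

set_option maxRecDepth 10000 in
lemma key12 : ∀ b0 b1 b2 b3 b4 b5 b6 b7 b8 b9 b10 b11 : Bool,
    P12 b0 b1 b2 b3 b4 b5 b6 b7 b8 b9 b10 b11 := by decide

lemma hface0 : ∀ e : Face 3,
    (e = EE 4 ∨ e = EE 5 ∨ e = EE 8 ∨ e = EE 9) ↔ (IsKFace e 1 ∧ Subface e (FF 0)) := by decide
lemma hface1 : ∀ e : Face 3,
    (e = EE 6 ∨ e = EE 7 ∨ e = EE 10 ∨ e = EE 11) ↔ (IsKFace e 1 ∧ Subface e (FF 1)) := by decide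
lemma hface2 : ∀ e : Face 3,
    (e = EE 0 ∨ e = EE 1 ∨ e = EE 8 ∨ e = EE 10) ↔ (IsKFace e 1 ∧ Subface e (FF 2)) := by decide
lemma hface3 : ∀ e : Face 3,
    (e = EE 2 ∨ e = EE 3 ∨ e = EE 9 ∨ e = EE 11) ↔ (IsKFace e 1 ∧ Subface e (FF 3)) := by decide
lemma hface4 : ∀ e : Face 3,
    (e = EE 0 ∨ e = EE 2 ∨ e = EE 4 ∨ e = EE 6) ↔ (IsKFace e 1 ∧ Subface e (FF 4)) := by decide
lemma hface5 : ∀ e : Face 3,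
    (e = EE 1 ∨ e = EE 3 ∨ e = EE 5 ∨ e = EE 7) ↔ (IsKFace e 1 ∧ Subface e (FF 5)) := by decide

lemma IsKFaceFF : ∀ k, IsKFace (FF k) 2 := by decide

/-- Counting lemma transporting the `Finset` cardinality to a list count. -/
lemma count_bridge (T : Fin 12 → Bool) :
    (Finset.univ.filter fun j => T j = true).card = List.countP (fun j => T j) (List.finRange 12) := by
  have h1 : (Finset.univ.filter fun j => T j = true).card
      = Multiset.countP (fun j => T j = true) (Finset.univ : Finset (Fin 12)).val := by
    rw [Multiset.countP_eq_card_filter]; rfl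
  rw [h1]
  have h2 : (Finset.univ : Finset (Fin 12)).val = ↑(List.finRange 12) := rfl
  rw [h2, Multiset.coe_countP]
  simp


/-- Uniform treatment of the six cases. -/
lemma case_helper (k : Fin 6) (j1 j2 j3 j4 : Fin 12)
    (hface : ∀ e : Face 3, (e = EE j1 ∨ e = EE j2 ∨ e = EE j3 ∨ e = EE j4) ↔
      (IsKFace e 1 ∧ Subface e (FF k)))
    (T : Fin 12 → Bool) (A : Set (Face 3)) (hAeq : A = EE '' {j | T j = true})
    (hTg : T = fun j => decide (j = j1 ∨ j = j2 ∨ j = j3 ∨ j = j4)) :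
    ∃ F : Face 3, IsKFace F 2 ∧ A = {e | IsKFace e 1 ∧ Subface e F} := by
  have hset : ∀ j, T j = true ↔ (j = j1 ∨ j = j2 ∨ j = j3 ∨ j = j4) := by
    intro j; rw [hTg]; simp
  refine ⟨FF k, IsKFaceFF k, ?_⟩
  rw [hAeq]
  ext e
  simp only [Set.mem_image, Set.mem_setOf_eq]
  constructor
  · rintro ⟨j, hj, rfl⟩
    refine (hface _).mp ?_
    rcases (hset j).mp hj with h|h|h|h <;> subst h <;> simp
  · intro he
    rcases (hface e).mpr he with h|h|h|h <;>
      exact ⟨_, (hset _).mpr (by simp), h.symm⟩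

lemma funext12 (T g : Fin 12 → Bool) (h0 : T 0 = g 0) (h1 : T 1 = g 1) (h2 : T 2 = g 2)
    (h3 : T 3 = g 3) (h4 : T 4 = g 4) (h5 : T 5 = g 5) (h6 : T 6 = g 6) (h7 : T 7 = g 7)
    (h8 : T 8 = g 8) (h9 : T 9 = g 9) (h10 : T 10 = g 10) (h11 : T 11 = g 11) : T = g := by
  funext j; fin_cases j
  exacts [h0, h1, h2, h3, h4, h5, h6, h7, h8, h9, h10, h11]

end Aux

/-- a set of at least four edges of `C^3` containing no pair of
antipodal vertices must be the boundary of a 2-face. -/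
theorem edges_no_antipodal_vertices_bound_face (A : Set (Face 3))
    (hedges : ∀ e ∈ A, IsKFace e 1)
    (hcard : 4 ≤ A.ncard)
    (hanti : ∀ v : Vertex 3, (∃ e ∈ A, VMem v e) → ¬ ∃ e ∈ A, VMem (fun i => ! v i) e) :
    ∃ F : Face 3, IsKFace F 2 ∧ A = {e | IsKFace e 1 ∧ Subface e F} := by
  classical
  set T : Fin 12 → Bool := fun j => if EE j ∈ A then true else false with hTdef
  have hT : ∀ j, T j = true ↔ EE j ∈ A := by
    intro j; by_cases h : EE j ∈ A <;> simp [hTdef, h]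
  have hAeq : A = EE '' {j | T j = true} := by
    ext e
    constructor
    · intro he
      obtain ⟨j, rfl⟩ := edge_rep e (hedges e he)
      exact ⟨j, (hT j).mpr he, rfl⟩
    · rintro ⟨j, hj, rfl⟩
      exact (hT j).mp hj
  -- cardinality hypothesis
  have hset : {j | T j = true} = ↑(Finset.univ.filter fun j => T j = true) := by
    ext j; simp
  have hcnt : 4 ≤ List.countP (fun b => b) [T 0, T 1, T 2, T 3, T 4, T 5, T 6, T 7, T 8, T 9, T 10, T 11] := by
    have h1 : A.ncard = (Finset.univ.filter fun j => T j = true).card := by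
      rw [hAeq, Set.ncard_image_of_injective _ EE_inj, hset, Set.ncard_coe_finset]
    have h2 : List.countP (fun j => T j) (List.finRange 12)
        = List.countP (fun b => b) [T 0, T 1, T 2, T 3, T 4, T 5, T 6, T 7, T 8, T 9, T 10, T 11] := by
      rfl
    rw [h1, count_bridge, h2] at hcard
    exact hcard
  -- antipodal hypotheses
  have key_anti : ∀ w : Fin 8, ∀ j j' : Fin 12, inc j w = true → inc j' (aidx w) = true →
      T j = true → T j' = true → False := by
    intro w j j' hj hj' h1 h2
    exact hanti (vtx w) ⟨EE j, (hT j).mp h1, inc_spec j w hj⟩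
      ⟨EE j', (hT j').mp h2, by rw [aidx_spec w]; exact inc_spec j' (aidx w) hj'⟩
  have hAnti : ∀ (w : Fin 8) (a b c d e f : Fin 12), inc a w = true → inc b w = true →
      inc c w = true → inc d (aidx w) = true → inc e (aidx w) = true → inc f (aidx w) = true →
      ((T a || T b || T c) && (T d || T e || T f)) = false := by
    intro w a b c d e f ha hb hc hd he hf
    rcases Bool.eq_false_or_eq_true ((T a || T b || T c) && (T d || T e || T f)) with h | h
    · exfalso
      rw [Bool.and_eq_true, Bool.or_eq_true, Bool.or_eq_true, Bool.or_eq_true, Bool.or_eq_true] at h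
      obtain ⟨h1, h2⟩ := h
      rcases h1 with (h1|h1)|h1 <;> rcases h2 with (h2|h2)|h2 <;>
        first
        | exact key_anti w a d ha hd h1 h2
        | exact key_anti w a e ha he h1 h2
        | exact key_anti w a f ha hf h1 h2
        | exact key_anti w b d hb hd h1 h2
        | exact key_anti w b e hb he h1 h2
        | exact key_anti w b f hb hf h1 h2
        | exact key_anti w c d hc hd h1 h2
        | exact key_anti w c e hc he h1 h2
        | exact key_anti w c f hc hf h1 h2
    · exact h
  have hA0 := hAnti 0 0 4 8 3 7 11 (by decide) (by decide) (by decide) (by decide) (by decide) (by decide)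
  have hA1 := hAnti 1 0 6 10 3 5 9 (by decide) (by decide) (by decide) (by decide) (by decide) (by decide)
  have hA2 := hAnti 2 2 4 9 1 7 10 (by decide) (by decide) (by decide) (by decide) (by decide) (by decide)
  have hA3 := hAnti 3 2 6 11 1 5 8 (by decide) (by decide) (by decide) (by decide) (by decide) (by decide)
  -- apply the core lemma
  have hkey := key12 (T 0) (T 1) (T 2) (T 3) (T 4) (T 5) (T 6) (T 7) (T 8) (T 9) (T 10) (T 11)
    hcnt hA0 hA1 hA2 hA3
  rcases hkey with h|h|h|h|h|h <;>
    obtain ⟨e0, e1, e2, e3, e4, e5, e6, e7, e8, e9, e10, e11⟩ :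
        _ ∧ _ ∧ _ ∧ _ ∧ _ ∧ _ ∧ _ ∧ _ ∧ _ ∧ _ ∧ _ ∧ _ := by
      simpa using h
  · exact case_helper 0 4 5 8 9 hface0 T A hAeq
      (funext12 T _ (by rw [e0]; rfl) (by rw [e1]; rfl) (by rw [e2]; rfl) (by rw [e3]; rfl)
        (by rw [e4]; rfl) (by rw [e5]; rfl) (by rw [e6]; rfl) (by rw [e7]; rfl)
        (by rw [e8]; rfl) (by rw [e9]; rfl) (by rw [e10]; rfl) (by rw [e11]; rfl))
  · exact case_helper 1 6 7 10 11 hface1 T A hAeq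
      (funext12 T _ (by rw [e0]; rfl) (by rw [e1]; rfl) (by rw [e2]; rfl) (by rw [e3]; rfl)
        (by rw [e4]; rfl) (by rw [e5]; rfl) (by rw [e6]; rfl) (by rw [e7]; rfl)
        (by rw [e8]; rfl) (by rw [e9]; rfl) (by rw [e10]; rfl) (by rw [e11]; rfl))
  · exact case_helper 2 0 1 8 10 hface2 T A hAeq
      (funext12 T _ (by rw [e0]; rfl) (by rw [e1]; rfl) (by rw [e2]; rfl) (by rw [e3]; rfl)
        (by rw [e4]; rfl) (by rw [e5]; rfl) (by rw [e6]; rfl) (by rw [e7]; rfl)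
        (by rw [e8]; rfl) (by rw [e9]; rfl) (by rw [e10]; rfl) (by rw [e11]; rfl))
  · exact case_helper 3 2 3 9 11 hface3 T A hAeq
      (funext12 T _ (by rw [e0]; rfl) (by rw [e1]; rfl) (by rw [e2]; rfl) (by rw [e3]; rfl)
        (by rw [e4]; rfl) (by rw [e5]; rfl) (by rw [e6]; rfl) (by rw [e7]; rfl)
        (by rw [e8]; rfl) (by rw [e9]; rfl) (by rw [e10]; rfl) (by rw [e11]; rfl))
  · exact case_helper 4 0 2 4 6 hface4 T A hAeq
      (funext12 T _ (by rw [e0]; rfl) (by rw [e1]; rfl) (by rw [e2]; rfl) (by rw [e3]; rfl)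
        (by rw [e4]; rfl) (by rw [e5]; rfl) (by rw [e6]; rfl) (by rw [e7]; rfl)
        (by rw [e8]; rfl) (by rw [e9]; rfl) (by rw [e10]; rfl) (by rw [e11]; rfl))
  · exact case_helper 5 1 3 5 7 hface5 T A hAeq
      (funext12 T _ (by rw [e0]; rfl) (by rw [e1]; rfl) (by rw [e2]; rfl) (by rw [e3]; rfl)
        (by rw [e4]; rfl) (by rw [e5]; rfl) (by rw [e6]; rfl) (by rw [e7]; rfl)
        (by rw [e8]; rfl) (by rw [e9]; rfl) (by rw [e10]; rfl) (by rw [e11]; rfl))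
end

section
/- In any cover of the twelve edges of the 3-cube by three sets of edges, at least one set contains a pair of antipodal vertices. -/
open Cube

/-- Auxiliary: the vertex corresponding to a representative of an antipodal pair. -/
def CubeAux.vertexOf (p : Bool × Bool) : Vertex 3 := ![p.1, p.2, false]

/-- Auxiliary: representative of the antipodal pair of `v`. -/
def CubeAux.rep (v : Vertex 3) : Bool × Bool :=
  if v 2 = true then (!(v 0), !(v 1)) else (v 0, v 1)

/-- Auxiliary: which side of its antipodal pair `v` is on. -/
def CubeAux.side (v : Vertex 3) : Bool := !(v 2)

def CubeAux.sel (a b c d : Fin 3 → Bool) : Bool × Bool → Fin 3 → Bool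
  | (false, false) => a
  | (false, true) => b
  | (true, false) => c
  | (true, true) => d

set_option maxRecDepth 100000 in
set_option maxHeartbeats 4000000 in
/-- Finite check: any choice of one vertex from each antipodal pair, for each of
three colours, leaves some edge of `C^3` with no colour touching both endpoints. -/
theorem CubeAux.aux : ∀ a b c d : Fin 3 → Bool,
    ∃ u w : Vertex 3, (Finset.univ.filter fun j => ¬ (u j = w j)).card = 1 ∧
      ∀ i : Fin 3, ¬ (sel a b c d (rep u) i = side u ∧ sel a b c d (rep w) i = side w) := by
  decide

open CubeAux in
/-- any 3-set cover of the edges of `C^3` has a set containing a pair of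
antipodal vertices. -/
theorem weak_LSB_C3 (A : Fin 3 → Set (Face 3))
    (hedges : ∀ i e, e ∈ A i → IsKFace e 1)
    (hcover : ∀ e : Face 3, IsKFace e 1 → ∃ i, e ∈ A i) :
    ∃ i, ∃ v : Vertex 3, (∃ e ∈ A i, VMem v e) ∧ (∃ e ∈ A i, VMem (fun j => ! v j) e) := by
  classical
  by_contra hcon
  push_neg at hcon
  set T : Fin 3 → Vertex 3 → Prop := fun i v => ∃ e ∈ A i, VMem v e with hT
  have hfree : ∀ i v, T i v → ¬ T i (fun j => ! v j) := by
    intro i v hv hnv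
    obtain ⟨e, he, hve⟩ := hnv
    exact hcon i v hv e he hve
  -- adjacency gives a common colour
  have hadj : ∀ u w : Vertex 3,
      (Finset.univ.filter fun j => ¬ (u j = w j)).card = 1 → ∃ i, T i u ∧ T i w := by
    intro u w hc
    set e : Face 3 := fun j => if u j = w j then some (u j) else none with he
    have hk : IsKFace e 1 := by
      unfold IsKFace
      rw [← hc]
      congr 1
      apply Finset.filter_congr
      intro j _
      by_cases h : u j = w j <;> simp [he, h]
    obtain ⟨i, hi⟩ := hcover e hk
    refine ⟨i, ⟨e, hi, ?_⟩, ⟨e, hi, ?_⟩⟩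
    · intro j b hb
      simp only [he] at hb
      by_cases h : u j = w j
      · rw [if_pos h] at hb
        exact Option.some.inj hb
      · rw [if_neg h] at hb
        exact absurd hb (by simp)
    · intro j b hb
      simp only [he] at hb
      by_cases h : u j = w j
      · rw [if_pos h] at hb
        rw [← h]
        exact Option.some.inj hb
      · rw [if_neg h] at hb
        exact absurd hb (by simp)
  -- build the choice function
  let g : Bool × Bool → Fin 3 → Bool := fun p i => if T i (vertexOf p) then true else false
  have key : ∀ i (v : Vertex 3), T i v → g (rep v) i = side v := by
    intro i v hv
    have hv3 : v = ![v 0, v 1, v 2] := by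
      funext j; fin_cases j <;> rfl
    by_cases h2 : v 2 = true
    · have hrep : rep v = (!(v 0), !(v 1)) := by simp [rep, h2]
      have hvert : vertexOf (rep v) = fun j => ! v j := by
        rw [hrep]; funext j; fin_cases j <;> simp [vertexOf, h2]
      have : ¬ T i (vertexOf (rep v)) := by rw [hvert]; exact hfree i v hv
      simp only [g, if_neg this, side, h2]
      rfl
    · have h2' : v 2 = false := by simpa using h2
      have hrep : rep v = (v 0, v 1) := by simp [rep, h2']
      have hvert : vertexOf (rep v) = v := by
        rw [hrep]; funext j; fin_cases j <;> simp [vertexOf, h2']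
      have : T i (vertexOf (rep v)) := by rw [hvert]; exact hv
      simp only [g, if_pos this, side, h2']
      rfl
  obtain ⟨u, w, hc, hbad⟩ :=
    aux (fun i => g (false, false) i) (fun i => g (false, true) i)
        (fun i => g (true, false) i) (fun i => g (true, true) i)
  have hsel : ∀ p i, sel (fun i => g (false, false) i) (fun i => g (false, true) i)
      (fun i => g (true, false) i) (fun i => g (true, true) i) p i = g p i := by
    rintro ⟨(_|_), (_|_)⟩ i <;> rfl
  obtain ⟨i, hu, hw⟩ := hadj u w hc
  exact hbad i ⟨by rw [hsel]; exact key i u hu, by rw [hsel]; exact key i w hw⟩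
end

section
/- For d ≥ 3, in any cover of the ridges of the d-cube by d sets of ridges, at least one set contains a pair of antipodal vertices. -/
open Cube
open Finset
open scoped Classical

section Aux

variable {d : ℕ}

def lit2face (d : ℕ) (x y : Fin d × Bool) : Face d :=
  fun i => if i = x.1 then some x.2 else if i = y.1 then some y.2 else none

lemma lit2face_eq_some {x y : Fin d × Bool} (hxy : x.1 ≠ y.1) {j : Fin d} {b : Bool} :
    lit2face d x y j = some b ↔ (j, b) = x ∨ (j, b) = y := by
  unfold lit2face
  by_cases h1 : j = x.1
  · subst h1
    simp [Prod.ext_iff, hxy, eq_comm]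
  · by_cases h2 : j = y.1
    · subst h2
      simp [Prod.ext_iff, h1, eq_comm]
      exact fun h => absurd h hxy
    · simp [Prod.ext_iff, h1, h2]

lemma lit2face_symm {x y : Fin d × Bool} (hxy : x.1 ≠ y.1) :
    lit2face d x y = lit2face d y x := by
  funext i
  unfold lit2face
  by_cases h1 : i = x.1 <;> by_cases h2 : i = y.1 <;> simp_all

lemma isKFace_lit2face {x y : Fin d × Bool} (hxy : x.1 ≠ y.1) :
    IsKFace (lit2face d x y) (d - 2) := by
  unfold IsKFace
  have : (Finset.univ.filter fun i => lit2face d x y i = none)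
      = ({x.1, y.1} : Finset (Fin d))ᶜ := by
    ext i
    simp only [Finset.mem_filter, Finset.mem_univ, true_and, Finset.mem_compl, Finset.mem_insert, Finset.mem_singleton]
    by_cases h1 : i = x.1 <;> by_cases h2 : i = y.1 <;>
      simp_all [lit2face]
  rw [this, Finset.card_compl]
  rw [Finset.card_insert_of_notMem (by simpa using hxy), Finset.card_singleton]
  simp

lemma exists_antipodal (R S : Face d) (h : ∀ j b, R j = some b → S j ≠ some b) :
    ∃ v : Vertex d, VMem v R ∧ VMem (fun j => ! v j) S := by
  refine ⟨fun j => (R j).elim ((S j).elim false (fun c => !c)) id, ?_, ?_⟩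
  · intro j b hb
    simp [hb]
  · intro j c hc
    cases hR : R j with
    | none => simp [hR, hc]
    | some b =>
      have hbc : b ≠ c := fun e => h j b hR (e ▸ hc)
      simp only [hR, Option.elim]
      cases b <;> cases c <;> simp_all
def goodP (d : ℕ) : Finset ((Fin d × Bool) × (Fin d × Bool)) :=
  Finset.univ.filter fun p => p.1.1 ≠ p.2.1

def partnerS (d : ℕ) (a : Fin d × Bool) : Finset (Fin d × Bool) :=
  Finset.univ.filter fun b => b.1 ≠ a.1

lemma partnerS_eq (a : Fin d × Bool) :
    partnerS d a = ({a.1}ᶜ : Finset (Fin d)) ×ˢ Finset.univ := by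
  ext ⟨j, b⟩
  simp [partnerS]

lemma card_partnerS (a : Fin d × Bool) : (partnerS d a).card = 2 * (d - 1) := by
  rw [partnerS_eq, Finset.card_product, Finset.card_compl]
  simp [Nat.mul_comm]

lemma card_goodP : (goodP d).card = d * (4 * (d - 1)) := by
  have heq : goodP d = Finset.univ.biUnion
      (fun a => ({a} : Finset (Fin d × Bool)) ×ˢ partnerS d a) := by
    ext ⟨a, b⟩
    simp [goodP, partnerS, eq_comm]
  rw [heq, Finset.card_biUnion]
  · simp only [Finset.card_product, Finset.card_singleton, one_mul, card_partnerS]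
    rw [Finset.sum_const, Finset.card_univ]
    simp [Fintype.card_prod]
    ring
  · intro a _ b _ hab
    simp only [Finset.disjoint_left]
    rintro ⟨u, v⟩ hu hv
    simp only [Finset.mem_product, Finset.mem_singleton] at hu hv
    exact hab (hu.1 ▸ hv.1 ▸ rfl)

def starF (d : ℕ) (v : Fin d × Bool) : Finset ((Fin d × Bool) × (Fin d × Bool)) :=
  (goodP d).filter fun p => p.1 = v ∨ p.2 = v

lemma card_starF (v : Fin d × Bool) : (starF d v).card = 4 * (d - 1) := by
  have heq : starF d v = ({v} ×ˢ partnerS d v) ∪ (partnerS d v ×ˢ {v}) := by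
    ext ⟨a, b⟩
    simp only [starF, goodP, partnerS, Finset.mem_filter, Finset.mem_univ, true_and,
      Finset.mem_union, Finset.mem_product, Finset.mem_singleton]
    constructor
    · rintro ⟨hne, rfl | rfl⟩
      · exact Or.inl ⟨rfl, fun e => hne e.symm⟩
      · exact Or.inr ⟨hne, rfl⟩
    · rintro (⟨rfl, h⟩ | ⟨h, rfl⟩)
      · exact ⟨fun e => h e.symm, Or.inl rfl⟩
      · exact ⟨h, Or.inr rfl⟩
  rw [heq, Finset.card_union_of_disjoint]
  · rw [Finset.card_product, Finset.card_product, Finset.card_singleton,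
      card_partnerS]
    ring
  · simp only [Finset.disjoint_left]
    rintro ⟨a, b⟩ h1 h2
    simp only [Finset.mem_product, Finset.mem_singleton, partnerS,
      Finset.mem_filter] at h1 h2
    exact h2.1.2 (h1.1 ▸ rfl)
lemma star_or_small {α : Type*} [DecidableEq α] (C : Finset (α × α))
    (hP : ∀ p ∈ C, p.1 ≠ p.2)
    (hsym : ∀ p ∈ C, (p.2, p.1) ∈ C)
    (hint : ∀ p ∈ C, ∀ q ∈ C, p.1 = q.1 ∨ p.1 = q.2 ∨ p.2 = q.1 ∨ p.2 = q.2) :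
    (∃ v, ∀ p ∈ C, p.1 = v ∨ p.2 = v) ∨ C.card ≤ 6 := by
  by_cases hs : ∃ v, ∀ p ∈ C, p.1 = v ∨ p.2 = v
  · exact Or.inl hs
  right
  push_neg at hs
  rcases C.eq_empty_or_nonempty with rfl | ⟨⟨x, y⟩, hxy⟩
  · simp
  obtain ⟨p, hp, hp1, hp2⟩ := hs x
  have hxne : x ≠ y := hP _ hxy
  obtain ⟨z, hyz, hzx⟩ : ∃ z, (y, z) ∈ C ∧ z ≠ x := by
    have h0 := hint _ hxy _ hp
    dsimp only at h0
    rcases h0 with h | h | h | h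
    · exact absurd h.symm hp1
    · exact absurd h.symm hp2
    · exact ⟨p.2, by rw [h]; exact hp, hp2⟩
    · refine ⟨p.1, ?_, hp1⟩
      have h2 := hsym _ hp
      rw [← h] at h2
      exact h2
  have hyzne : y ≠ z := hP _ hyz
  obtain ⟨q, hq, hq1, hq2⟩ := hs y
  have hxq : q.1 = x ∨ q.2 = x := by
    have h0 := hint _ hq _ hxy
    dsimp only at h0
    rcases h0 with h | h | h | h
    · exact Or.inl h
    · exact absurd h hq1
    · exact Or.inr h
    · exact absurd h hq2
  have hzq : q.1 = z ∨ q.2 = z := by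
    have h0 := hint _ hq _ hyz
    dsimp only at h0
    rcases h0 with h | h | h | h
    · exact absurd h hq1
    · exact Or.inl h
    · exact absurd h hq2
    · exact Or.inr h
  have hxz : (x, z) ∈ C := by
    rcases hxq with h1 | h1 <;> rcases hzq with h2 | h2
    · exact absurd (h1 ▸ h2 : x = z) (Ne.symm hzx)
    · have he : q = (x, z) := Prod.ext h1 h2
      rwa [he] at hq
    · have he : q = (z, x) := Prod.ext h2 h1
      rw [he] at hq
      exact hsym _ hq
    · exact absurd (h1 ▸ h2 : x = z) (Ne.symm hzx)
  have hsub : C ⊆ {(x, y), (y, x), (y, z), (z, y), (x, z), (z, x)} := by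
    rintro ⟨a, b⟩ ha
    have e1 := hint _ ha _ hxy
    have e2 := hint _ ha _ hyz
    have e3 := hint _ ha _ hxz
    have hab : a ≠ b := hP _ ha
    dsimp only at e1 e2 e3 hab
    simp only [Finset.mem_insert, Finset.mem_singleton, Prod.mk.injEq]
    by_cases hax : a = x
    · subst hax
      rcases e2 with h | h | h | h
      · exact absurd h hxne
      · exact absurd h (Ne.symm hzx)
      · exact Or.inl ⟨rfl, h⟩
      · exact Or.inr (Or.inr (Or.inr (Or.inr (Or.inl ⟨rfl, h⟩))))
    · by_cases hbx : b = x
      · subst hbx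
        rcases e2 with h | h | h | h
        · exact Or.inr (Or.inl ⟨h, rfl⟩)
        · exact Or.inr (Or.inr (Or.inr (Or.inr (Or.inr ⟨h, rfl⟩))))
        · exact absurd h hxne
        · exact absurd h (Ne.symm hzx)
      · have hy : a = y ∨ b = y := by
          rcases e1 with h | h | h | h
          · exact absurd h hax
          · exact Or.inl h
          · exact absurd h hbx
          · exact Or.inr h
        have hz : a = z ∨ b = z := by
          rcases e3 with h | h | h | h
          · exact absurd h hax
          · exact Or.inl h
          · exact absurd h hbx
          · exact Or.inr h
        rcases hy with rfl | rfl
        · rcases hz with h | h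
          · exact absurd h hyzne
          · exact Or.inr (Or.inr (Or.inl ⟨rfl, h⟩))
        · rcases hz with h | h
          · exact Or.inr (Or.inr (Or.inr (Or.inl ⟨h, rfl⟩)))
          · exact absurd h hyzne
  refine (Finset.card_le_card hsub).trans ?_
  refine (Finset.card_insert_le _ _).trans (Nat.succ_le_succ ?_)
  refine (Finset.card_insert_le _ _).trans (Nat.succ_le_succ ?_)
  refine (Finset.card_insert_le _ _).trans (Nat.succ_le_succ ?_)
  refine (Finset.card_insert_le _ _).trans (Nat.succ_le_succ ?_)
  refine (Finset.card_insert_le _ _).trans (Nat.succ_le_succ ?_)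
  simp

end Aux


/-- for `d ≥ 3`, any `d`-set ridge cover of `C^d` has a set containing
a pair of antipodal vertices. -/
theorem weak_cubical_LSB (d : ℕ) (hd : 3 ≤ d) (A : Fin d → Set (Face d))
    (hridges : ∀ i R, R ∈ A i → IsKFace R (d - 2))
    (hcover : ∀ R : Face d, IsKFace R (d - 2) → ∃ i, R ∈ A i) :
    ∃ i, ∃ v : Vertex d, (∃ R ∈ A i, VMem v R) ∧ (∃ R ∈ A i, VMem (fun j => ! v j) R) := by
  classical
  by_contra hcon
  set B : Fin d → Finset ((Fin d × Bool) × (Fin d × Bool)) :=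
    fun i => (goodP d).filter fun p => lit2face d p.1 p.2 ∈ A i with hBdef
  have hBP : ∀ i, ∀ p ∈ B i, p.1.1 ≠ p.2.1 := by
    intro i p hp
    have h := (Finset.mem_filter.mp hp).1
    simpa [goodP] using h
  have hBmem : ∀ i, ∀ p ∈ B i, lit2face d p.1 p.2 ∈ A i :=
    fun i p hp => (Finset.mem_filter.mp hp).2
  have hBsym : ∀ i, ∀ p ∈ B i, (p.2, p.1) ∈ B i := by
    intro i p hp
    have h1 := hBP i p hp
    refine Finset.mem_filter.mpr ⟨?_, ?_⟩
    · simp only [goodP, Finset.mem_filter, Finset.mem_univ, true_and]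
      exact fun e => h1 e.symm
    · exact (lit2face_symm (Ne.symm h1)) ▸ hBmem i p hp
  have hBint : ∀ i, ∀ p ∈ B i, ∀ q ∈ B i, p.1 = q.1 ∨ p.1 = q.2 ∨ p.2 = q.1 ∨ p.2 = q.2 := by
    intro i p hp q hq
    by_contra hne
    push_neg at hne
    obtain ⟨h1, h2, h3, h4⟩ := hne
    have hpP := hBP i p hp
    have hqP := hBP i q hq
    have hnolit : ∀ j b, lit2face d p.1 p.2 j = some b → lit2face d q.1 q.2 j ≠ some b := by
      intro j b hR hS
      rcases (lit2face_eq_some hpP).mp hR with e | e <;>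
        rcases (lit2face_eq_some hqP).mp hS with f | f
      · exact h1 (e.symm.trans f)
      · exact h2 (e.symm.trans f)
      · exact h3 (e.symm.trans f)
      · exact h4 (e.symm.trans f)
    obtain ⟨v, hv1, hv2⟩ := exists_antipodal _ _ hnolit
    exact hcon ⟨i, v, ⟨_, hBmem i p hp, hv1⟩, ⟨_, hBmem i q hq, hv2⟩⟩
  have hcoverP : ∀ p ∈ goodP d, ∃ i, p ∈ B i := by
    intro p hp
    have hne : p.1.1 ≠ p.2.1 := by simpa [goodP] using hp
    obtain ⟨i, hi⟩ := hcover (lit2face d p.1 p.2) (isKFace_lit2face hne)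
    exact ⟨i, Finset.mem_filter.mpr ⟨hp, hi⟩⟩
  have hPne : ∀ i, ∀ p ∈ B i, p.1 ≠ p.2 :=
    fun i p hp e => hBP i p hp (congrArg Prod.fst e)
  have hcard_le : ∀ i, (B i).card ≤ 4 * (d - 1) := by
    intro i
    rcases star_or_small (B i) (hPne i) (hBsym i) (hBint i) with ⟨v, hv⟩ | h6
    · have hsubstar : B i ⊆ starF d v := by
        intro p hp
        exact Finset.mem_filter.mpr ⟨(Finset.filter_subset _ _) hp, hv p hp⟩
      calc (B i).card ≤ (starF d v).card := Finset.card_le_card hsubstar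
        _ = 4 * (d - 1) := card_starF v
    · exact h6.trans (by omega)
  have hsubU : goodP d ⊆ Finset.univ.biUnion B := by
    intro p hp
    obtain ⟨i, hi⟩ := hcoverP p hp
    exact Finset.mem_biUnion.mpr ⟨i, Finset.mem_univ i, hi⟩
  have hsum : d * (4 * (d - 1)) ≤ ∑ i, (B i).card := by
    rw [← card_goodP]
    exact (Finset.card_le_card hsubU).trans Finset.card_biUnion_le
  have hall : ∀ i, (B i).card = 4 * (d - 1) := by
    by_contra hne
    push_neg at hne
    obtain ⟨i0, hi0⟩ := hne
    have hlt : ∑ i, (B i).card < ∑ _i : Fin d, 4 * (d - 1) :=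
      Finset.sum_lt_sum (fun i _ => hcard_le i)
        ⟨i0, Finset.mem_univ i0, lt_of_le_of_ne (hcard_le i0) hi0⟩
    rw [Finset.sum_const, Finset.card_univ, Fintype.card_fin, smul_eq_mul] at hlt
    omega
  have hstarall : ∀ i, ∃ v, ∀ p ∈ B i, p.1 = v ∨ p.2 = v := by
    intro i
    rcases star_or_small (B i) (hPne i) (hBsym i) (hBint i) with h | h6
    · exact h
    · exfalso
      have := hall i
      omega
  choose xc hxc using hstarall
  set X : Finset (Fin d × Bool) := Finset.image xc Finset.univ with hX
  have hXcard : X.card ≤ d := le_trans Finset.card_image_le (by simp)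
  have hfull : Fintype.card (Fin d × Bool) = d * 2 := by simp
  have hXc : 3 ≤ Xᶜ.card := by
    rw [Finset.card_compl, hfull]
    omega
  obtain ⟨a, ha, b, hb, hab⟩ : ∃ a ∈ Xᶜ, ∃ b ∈ Xᶜ, a.1 ≠ b.1 := by
    by_contra hc
    push_neg at hc
    obtain ⟨a0, ha0⟩ : Xᶜ.Nonempty := Finset.card_pos.mp (by omega)
    have hsub2 : Xᶜ ⊆ ({a0.1} : Finset (Fin d)) ×ˢ Finset.univ := by
      intro b hb
      refine Finset.mem_product.mpr ⟨?_, Finset.mem_univ _⟩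
      simp only [Finset.mem_singleton]
      exact hc b hb a0 ha0
    have hle := Finset.card_le_card hsub2
    rw [Finset.card_product] at hle
    simp at hle
    omega
  have hgp : (a, b) ∈ goodP d := by simp [goodP, hab]
  obtain ⟨i, hi⟩ := hcoverP (a, b) hgp
  have hxX : xc i ∈ X := Finset.mem_image_of_mem xc (Finset.mem_univ i)
  rcases hxc i (a, b) hi with h | h
  · exact (Finset.mem_compl.mp ha) (by rw [show a = xc i from h]; exact hxX)
  · exact (Finset.mem_compl.mp hb) (by rw [show b = xc i from h]; exact hxX)
end

section
/- For d ≥ 3, in any cover of the ridges of the d-cube by d sets of ridges, at least one set contains a pair of antipodal (d-4)-faces. -/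
open Cube

namespace CubeAux

open Finset

instance instDecIsKFace {d : ℕ} (F : Face d) (k : ℕ) : Decidable (IsKFace F k) :=
  decidable_of_iff ((Finset.univ.filter fun i => F i = none).card = k) Iff.rfl

variable {d : ℕ}

/-- The ridge with fixed coordinates `i ↦ a`, `j ↦ b`. -/
def ridgeFace (i j : Fin d) (a b : Bool) : Face d :=
  fun k => if k = i then some a else if k = j then some b else none

lemma ridgeFace_eq_some {i j : Fin d} (hij : i ≠ j) {a b v : Bool} {k : Fin d} :
    ridgeFace i j a b k = some v ↔ (k = i ∧ v = a) ∨ (k = j ∧ v = b) := by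
  unfold ridgeFace
  split_ifs with h1 h2
  · subst h1; simp [hij, eq_comm]
  · subst h2; simp [h1, eq_comm]
  · simp [h1, h2]

lemma ridgeFace_comm {i j : Fin d} (hij : i ≠ j) (a b : Bool) :
    ridgeFace i j a b = ridgeFace j i b a := by
  funext k
  unfold ridgeFace
  split_ifs with h1 h2 <;> try rfl
  exact absurd (h1 ▸ h2 : i = j).symm (Ne.symm hij)

lemma fixed_card (hd : 2 ≤ d) {R : Face d} (hR : IsKFace R (d - 2)) :
    (univ.filter fun k => R k ≠ none).card = 2 := by
  have h1 := Finset.card_filter_add_card_filter_not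
    (s := (univ : Finset (Fin d))) (p := fun k => R k = none)
  have h2 : (univ.filter fun k => R k = none).card = d - 2 := hR
  have h3 : (univ : Finset (Fin d)).card = d := by simp
  simp only [ne_eq]
  omega

lemma eq_ridgeFace (hd : 2 ≤ d) {R : Face d} (hR : IsKFace R (d - 2)) {i j : Fin d}
    (hij : i ≠ j) {a b : Bool} (ha : R i = some a) (hb : R j = some b) :
    R = ridgeFace i j a b := by
  have hs : ({i, j} : Finset (Fin d)) ⊆ univ.filter (fun k => R k ≠ none) := by
    intro k hk
    simp only [mem_insert, mem_singleton] at hk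
    rcases hk with rfl | rfl <;> simp [mem_filter, ha, hb]
  have heq : ({i, j} : Finset (Fin d)) = univ.filter (fun k => R k ≠ none) :=
    Finset.eq_of_subset_of_card_le hs (by rw [fixed_card hd hR, Finset.card_pair hij])
  funext k
  by_cases h1 : k = i
  · subst h1; simp [ridgeFace, ha]
  · by_cases h2 : k = j
    · subst h2; simp [ridgeFace, h1, hb]
    · have hk : k ∉ ({i, j} : Finset (Fin d)) := by simp [h1, h2]
      rw [heq] at hk
      simp only [mem_filter, mem_univ, true_and, not_not] at hk
      simp [ridgeFace, h1, h2, hk]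

lemma exists_ridgeFace (hd : 2 ≤ d) {R : Face d} (hR : IsKFace R (d - 2)) :
    ∃ i j a b, i ≠ j ∧ R = ridgeFace i j a b := by
  obtain ⟨i, j, hij, hset⟩ := Finset.card_eq_two.mp (fixed_card hd hR)
  have hi : R i ≠ none := by
    have : i ∈ univ.filter fun k => R k ≠ none := by rw [hset]; simp
    simpa using this
  have hj : R j ≠ none := by
    have : j ∈ univ.filter fun k => R k ≠ none := by rw [hset]; simp
    simpa using this
  obtain ⟨a, ha⟩ := Option.ne_none_iff_exists'.mp hi
  obtain ⟨b, hb⟩ := Option.ne_none_iff_exists'.mp hj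
  exact ⟨i, j, a, b, hij, eq_ridgeFace hd hR hij ha hb⟩

lemma other_lit (hd : 2 ≤ d) {R : Face d} (hR : IsKFace R (d - 2)) {i : Fin d} {a : Bool}
    (ha : R i = some a) : ∃ u c, u ≠ i ∧ R = ridgeFace i u a c := by
  obtain ⟨i1, j1, a1, b1, hne, rfl⟩ := exists_ridgeFace hd hR
  rcases (ridgeFace_eq_some hne).mp ha with ⟨h1, h2⟩ | ⟨h1, h2⟩
  · refine ⟨j1, b1, ?_, ?_⟩
    · rw [h1]; exact fun h => hne h.symm
    · rw [h1, h2]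
  · refine ⟨i1, a1, ?_, ?_⟩
    · rw [h1]; exact hne
    · rw [h1, h2]; exact ridgeFace_comm hne a1 b1

lemma ridgeFace_isRidge {i j : Fin d} (hij : i ≠ j) (a b : Bool) :
    IsKFace (ridgeFace i j a b) (d - 2) := by
  unfold IsKFace
  have h : (univ.filter fun k => ridgeFace i j a b k = none)
      = ({i, j} : Finset (Fin d))ᶜ := by
    ext k
    simp only [mem_filter, mem_univ, true_and, mem_compl, mem_insert, mem_singleton]
    unfold ridgeFace
    split_ifs with h1 h2
    · simp [h1]
    · simp [h1, h2]
    · simp [h1, h2]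
  rw [h, Finset.card_compl, Finset.card_pair hij, Fintype.card_fin]

lemma lits_card (hd : 2 ≤ d) {R : Face d} (hR : IsKFace R (d - 2)) :
    (univ.filter fun p : Fin d × Bool => R p.1 = some p.2).card = 2 := by
  obtain ⟨i, j, a, b, hij, rfl⟩ := exists_ridgeFace hd hR
  have h : (univ.filter fun p : Fin d × Bool => ridgeFace i j a b p.1 = some p.2)
      = {(i, a), (j, b)} := by
    ext p
    simp only [mem_filter, mem_univ, true_and, mem_insert, mem_singleton,
      ridgeFace_eq_some hij, Prod.ext_iff]
  rw [h]
  exact Finset.card_pair (by simp [Prod.ext_iff, hij])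

/-- The "star" of ridges containing the literal `(i, a)` has exactly `2(d-1)` elements. -/
lemma card_star (hd : 2 ≤ d) (i : Fin d) (a : Bool) :
    ((univ : Finset (Face d)).filter fun R => IsKFace R (d - 2) ∧ R i = some a).card
      = 2 * (d - 1) := by
  have himg : ((univ : Finset (Face d)).filter fun R => IsKFace R (d - 2) ∧ R i = some a)
      = (univ.filter fun p : Fin d × Bool => p.1 ≠ i).image
        (fun p => ridgeFace i p.1 a p.2) := by
    ext R
    simp only [mem_filter, mem_image, mem_univ, true_and]
    constructor
    · rintro ⟨hR, ha⟩
      obtain ⟨u, c, hu, rfl⟩ := other_lit hd hR ha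
      exact ⟨(u, c), hu, rfl⟩
    · rintro ⟨⟨u, c⟩, hu, rfl⟩
      have hne : i ≠ u := fun h => hu h.symm
      exact ⟨ridgeFace_isRidge hne a c, by simp [ridgeFace]⟩
  rw [himg, Finset.card_image_of_injOn]
  · have h2 : ((univ : Finset (Fin d × Bool)).filter fun p => ¬ p.1 ≠ i)
        = {i} ×ˢ (univ : Finset Bool) := by
      ext ⟨x, y⟩
      cases y <;> simp [Finset.mem_product]
    have h1 := Finset.card_filter_add_card_filter_not
      (s := (univ : Finset (Fin d × Bool))) (p := fun p => p.1 ≠ i)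
    rw [h2] at h1
    simp only [Finset.card_univ, Fintype.card_prod, Fintype.card_fin, Fintype.card_bool,
      Finset.card_product, Finset.card_singleton] at h1
    omega
  · intro p hp q hq heq
    simp only [coe_filter, Set.mem_setOf_eq, mem_univ, true_and] at hp hq
    have heq' : ridgeFace i p.1 a p.2 = ridgeFace i q.1 a q.2 := heq
    have hlp : ridgeFace i q.1 a q.2 p.1 = some p.2 := by
      rw [← heq', ridgeFace_eq_some (show i ≠ p.1 from fun h => hp h.symm)]
      exact Or.inr ⟨rfl, rfl⟩
    rcases (ridgeFace_eq_some (show i ≠ q.1 from fun h => hq h.symm)).mp hlp with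
      ⟨h1, _⟩ | ⟨h1, h2⟩
    · exact absurd h1 hp
    · exact Prod.ext_iff.mpr ⟨h1, h2⟩

/-- Total number of ridges: `d · 2(d-1)`. -/
lemma card_ridges (hd : 2 ≤ d) :
    ((univ : Finset (Face d)).filter fun R => IsKFace R (d - 2)).card = d * (2 * (d - 1)) := by
  have key : ∑ p : Fin d × Bool,
        (((univ : Finset (Face d)).filter fun R => IsKFace R (d - 2)).filter
          fun R => R p.1 = some p.2).card
      = ∑ R ∈ (univ : Finset (Face d)).filter fun R => IsKFace R (d - 2),
          (univ.filter fun p : Fin d × Bool => R p.1 = some p.2).card := by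
    simp only [Finset.card_filter]
    rw [Finset.sum_comm]
  have lhs : ∑ p : Fin d × Bool,
        (((univ : Finset (Face d)).filter fun R => IsKFace R (d - 2)).filter
          fun R => R p.1 = some p.2).card
      = (d * 2) * (2 * (d - 1)) := by
    have h : ∀ p : Fin d × Bool,
        (((univ : Finset (Face d)).filter fun R => IsKFace R (d - 2)).filter
          fun R => R p.1 = some p.2).card = 2 * (d - 1) := by
      intro p
      rw [Finset.filter_filter]
      exact card_star hd p.1 p.2
    rw [Finset.sum_congr rfl fun p _ => h p]
    simp [Finset.card_univ, mul_comm]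
  have rhs : ∑ R ∈ (univ : Finset (Face d)).filter fun R => IsKFace R (d - 2),
        (univ.filter fun p : Fin d × Bool => R p.1 = some p.2).card
      = ((univ : Finset (Face d)).filter fun R => IsKFace R (d - 2)).card * 2 := by
    rw [Finset.sum_congr rfl fun R hR => lits_card hd (Finset.mem_filter.mp hR).2]
    simp [mul_comm]
  have key3 := lhs.symm.trans (key.trans rhs)
  have h4 : 2 * (d * (2 * (d - 1)))
      = 2 * ((univ : Finset (Face d)).filter fun R => IsKFace R (d - 2)).card := by
    calc 2 * (d * (2 * (d - 1))) = (d * 2) * (2 * (d - 1)) := by ring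
      _ = ((univ : Finset (Face d)).filter fun R => IsKFace R (d - 2)).card * 2 := key3
      _ = _ := by ring
  exact (Nat.eq_of_mul_eq_mul_left two_pos h4).symm

/-- Classification of pairwise-agreeing families of ridges: star or triangle. -/
lemma classify (hd : 3 ≤ d) (B : Finset (Face d)) (hB : ∀ R ∈ B, IsKFace R (d - 2))
    (hagree : ∀ R ∈ B, ∀ R' ∈ B,
      ∃ p : Fin d × Bool, R p.1 = some p.2 ∧ R' p.1 = some p.2) :
    (∃ p : Fin d × Bool, ∀ R ∈ B, R p.1 = some p.2) ∨ B.card ≤ 3 := by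
  classical
  have hd2 : 2 ≤ d := by omega
  have lit_of : ∀ (R' : Face d) (i' j' : Fin d) (a' b' : Bool), i' ≠ j' →
      (∃ p : Fin d × Bool, R' p.1 = some p.2 ∧ ridgeFace i' j' a' b' p.1 = some p.2) →
      R' i' = some a' ∨ R' j' = some b' := by
    rintro R' i' j' a' b' hne ⟨p, h1, h2⟩
    rcases (ridgeFace_eq_some hne).mp h2 with ⟨e1, e2⟩ | ⟨e1, e2⟩
    · exact Or.inl (by rw [← e1, ← e2]; exact h1)
    · exact Or.inr (by rw [← e1, ← e2]; exact h1)
  rcases B.eq_empty_or_nonempty with rfl | ⟨R1, hR1⟩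
  · exact Or.inl ⟨(⟨0, by omega⟩, false), by simp⟩
  obtain ⟨i, j, a, b, hij, hR1eq⟩ := exists_ridgeFace hd2 (hB R1 hR1)
  by_cases hx : ∀ R ∈ B, R i = some a
  · exact Or.inl ⟨(i, a), hx⟩
  by_cases hy : ∀ R ∈ B, R j = some b
  · exact Or.inl ⟨(j, b), hy⟩
  push_neg at hx hy
  obtain ⟨R2, hR2, hR2x⟩ := hx
  obtain ⟨R3, hR3, hR3y⟩ := hy
  have hR2y : R2 j = some b := by
    rcases lit_of R2 i j a b hij (by
      obtain ⟨p, h1, h2⟩ := hagree R1 hR1 R2 hR2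
      rw [hR1eq] at h1
      exact ⟨p, h2, h1⟩) with h | h
    · exact absurd h hR2x
    · exact h
  have hR3x : R3 i = some a := by
    rcases lit_of R3 i j a b hij (by
      obtain ⟨p, h1, h2⟩ := hagree R1 hR1 R3 hR3
      rw [hR1eq] at h1
      exact ⟨p, h2, h1⟩) with h | h
    · exact h
    · exact absurd h hR3y
  obtain ⟨u, z, huj, hR2eq⟩ := other_lit hd2 (hB R2 hR2) hR2y
  obtain ⟨v, w, hvi, hR3eq⟩ := other_lit hd2 (hB R3 hR3) hR3x
  have huvzw : u = v ∧ z = w := by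
    obtain ⟨p, h2p, h3p⟩ := hagree R2 hR2 R3 hR3
    have h2p' : ridgeFace j u b z p.1 = some p.2 := by rw [← hR2eq]; exact h2p
    rcases (ridgeFace_eq_some (show j ≠ u from fun h => huj h.symm)).mp h2p' with
      ⟨e1, e2⟩ | ⟨e1, e2⟩
    · exact absurd (by rw [← e1, ← e2]; exact h3p) hR3y
    · have h3p' : ridgeFace i v a w p.1 = some p.2 := by rw [← hR3eq]; exact h3p
      rcases (ridgeFace_eq_some (show i ≠ v from fun h => hvi h.symm)).mp h3p' with
        ⟨e3, e4⟩ | ⟨e3, e4⟩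
      · exact absurd (by rw [← e3, ← e4]; exact h2p) hR2x
      · exact ⟨e1 ▸ e3, e2 ▸ e4⟩
  obtain ⟨h5, h6⟩ := huvzw
  subst h5
  subst h6
  right
  have hiu : i ≠ u := fun h => hvi h.symm
  have hju : j ≠ u := fun h => huj h.symm
  have hsub : B ⊆ {R1, R2, R3} := by
    intro R hR
    have c1 := lit_of R i j a b hij (by
      obtain ⟨p, h1, h2⟩ := hagree R hR R1 hR1
      rw [hR1eq] at h2; exact ⟨p, h1, h2⟩)
    have c2 := lit_of R j u b z hju (by
      obtain ⟨p, h1, h2⟩ := hagree R hR R2 hR2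
      rw [hR2eq] at h2; exact ⟨p, h1, h2⟩)
    have c3 := lit_of R i u a z hiu (by
      obtain ⟨p, h1, h2⟩ := hagree R hR R3 hR3
      rw [hR3eq] at h2; exact ⟨p, h1, h2⟩)
    have hRr := hB R hR
    simp only [mem_insert, mem_singleton]
    rcases c1 with h1 | h1
    · rcases c2 with h2 | h2
      · exact Or.inl (by rw [eq_ridgeFace hd2 hRr hij h1 h2, ← hR1eq])
      · exact Or.inr (Or.inr (by rw [eq_ridgeFace hd2 hRr hiu h1 h2, ← hR3eq]))
    · rcases c3 with h2 | h2
      · exact Or.inl (by rw [eq_ridgeFace hd2 hRr hij h2 h1, ← hR1eq])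
      · exact Or.inr (Or.inl (by rw [eq_ridgeFace hd2 hRr hju h1 h2, ← hR2eq]))
  have h0 := Finset.card_le_card hsub
  have h1 := Finset.card_insert_le R1 ({R2, R3} : Finset (Face d))
  have h2 := Finset.card_insert_le R2 ({R3} : Finset (Face d))
  have h3 : ({R3} : Finset (Face d)).card = 1 := Finset.card_singleton R3
  omega

end CubeAux

open CubeAux Finset

/-- medium cubical LSB: for `d ≥ 3`, any `d`-set ridge cover of `C^d`
has a set containing a pair of antipodal `(d-4)`-faces. -/
theorem medium_cubical_LSB (d : ℕ) (hd : 3 ≤ d) (A : Fin d → Set (Face d))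
    (hridges : ∀ i R, R ∈ A i → IsKFace R (d - 2))
    (hcover : ∀ R : Face d, IsKFace R (d - 2) → ∃ i, R ∈ A i) :
    ∃ i, ∃ P P' : Face d, IsKFace P (d - 4) ∧ Antipodal P P' ∧
      SetContains (A i) P ∧ SetContains (A i) P' := by
  classical
  by_contra hcon
  push_neg at hcon
  -- Each set is "conflict-free": any two of its ridges share a (coordinate, value) literal.
  have hcf : ∀ i, ∀ R ∈ A i, ∀ R' ∈ A i,
      ∃ p : Fin d × Bool, R p.1 = some p.2 ∧ R' p.1 = some p.2 := by
    intro i R hR R' hR'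
    by_contra hno
    push_neg at hno
    have hRridge := hridges i R hR
    have hR'ridge := hridges i R' hR'
    have hscard : (univ.filter fun k => R k ≠ none ∨ R' k ≠ none).card ≤ min d 4 := by
      have hsub4 : (univ.filter fun k => R k ≠ none ∨ R' k ≠ none).card ≤ 4 := by
        obtain ⟨i1, j1, a1, b1, hne1, he1⟩ := exists_ridgeFace (by omega) hRridge
        obtain ⟨i2, j2, a2, b2, hne2, he2⟩ := exists_ridgeFace (by omega) hR'ridge
        have hss : (univ.filter fun k => R k ≠ none ∨ R' k ≠ none)
            ⊆ {i1, j1, i2, j2} := by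
          intro k hk
          simp only [mem_filter, mem_univ, true_and] at hk
          simp only [mem_insert, mem_singleton]
          rcases hk with hk | hk
          · rw [he1] at hk
            unfold ridgeFace at hk
            by_cases e1 : k = i1
            · tauto
            by_cases e2 : k = j1
            · tauto
            simp [e1, e2] at hk
          · rw [he2] at hk
            unfold ridgeFace at hk
            by_cases e1 : k = i2
            · tauto
            by_cases e2 : k = j2
            · tauto
            simp [e1, e2] at hk
        have h0 := Finset.card_le_card hss
        have h1 := Finset.card_insert_le i1 ({j1, i2, j2} : Finset (Fin d))
        have h2 := Finset.card_insert_le j1 ({i2, j2} : Finset (Fin d))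
        have h3 := Finset.card_insert_le i2 ({j2} : Finset (Fin d))
        have h4 : ({j2} : Finset (Fin d)).card = 1 := Finset.card_singleton j2
        omega
      have hsubd : (univ.filter fun k => R k ≠ none ∨ R' k ≠ none).card ≤ d := by
        have := Finset.card_le_univ (univ.filter fun k => R k ≠ none ∨ R' k ≠ none)
        simpa using this
      omega
    obtain ⟨T, hsT, _, hTcard⟩ := Finset.exists_subsuperset_card_eq
      (Finset.subset_univ (univ.filter fun k => R k ≠ none ∨ R' k ≠ none)) hscard
      (by simp)
    set P : Face d := fun k => if k ∈ T then some ((R k).getD (!((R' k).getD true))) else none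
      with hP
    have hPk : IsKFace P (d - 4) := by
      have hPfilter : (univ.filter fun k => P k = none) = Tᶜ := by
        ext k
        simp only [mem_filter, mem_univ, true_and, mem_compl, hP]
        split_ifs with h <;> simp [h]
      unfold IsKFace
      rw [hPfilter, Finset.card_compl, hTcard, Fintype.card_fin]
      omega
    have hsubR : Subface P R := by
      intro k b hkb
      have hkT : k ∈ T := hsT (by
        simp only [mem_filter, mem_univ, true_and]
        exact Or.inl (by rw [hkb]; simp))
      simp only [hP]
      rw [if_pos hkT, hkb]
      rfl
    have hsubR' : Subface (fun k => (P k).map (!·)) R' := by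
      intro k b hkb
      have hkT : k ∈ T := hsT (by
        simp only [mem_filter, mem_univ, true_and]
        exact Or.inr (by rw [hkb]; simp))
      show (P k).map (!·) = some b
      simp only [hP]
      rw [if_pos hkT]
      cases hRk : R k with
      | none => simp [hkb]
      | some a =>
        have hb : b = !a := by
          have hne := hno (k, a) hRk
          rw [hkb] at hne
          simp only [ne_eq, Option.some.injEq] at hne
          cases a <;> cases b <;> simp_all
        simp [hb]
    exact hcon i P (fun k => (P k).map (!·)) hPk (fun k => rfl)
      ⟨R, hR, hsubR⟩ ⟨R', hR', hsubR'⟩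
  -- Finset versions.
  set Ai : Fin d → Finset (Face d) := fun i => univ.filter (· ∈ A i) with hAi
  have hmemAi : ∀ i R, R ∈ Ai i ↔ R ∈ A i := by
    intro i R; simp [hAi]
  have hbound : ∀ i, (Ai i).card ≤ 2 * (d - 1) := by
    intro i
    rcases classify hd (Ai i) (fun R hR => hridges i R ((hmemAi i R).mp hR))
      (fun R hR R' hR' => hcf i R ((hmemAi i R).mp hR) R' ((hmemAi i R').mp hR')) with
      ⟨p, hp⟩ | h3
    · have hsubs : Ai i ⊆ univ.filter fun R => IsKFace R (d - 2) ∧ R p.1 = some p.2 := by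
        intro R hR
        simp only [mem_filter, mem_univ, true_and]
        exact ⟨hridges i R ((hmemAi i R).mp hR), hp R hR⟩
      exact le_of_le_of_eq (Finset.card_le_card hsubs) (card_star (by omega) p.1 p.2)
    · omega
  have hcov : ((univ : Finset (Face d)).filter fun R => IsKFace R (d - 2))
      ⊆ univ.biUnion Ai := by
    intro R hR
    obtain ⟨i, hi⟩ := hcover R (Finset.mem_filter.mp hR).2
    exact Finset.mem_biUnion.mpr ⟨i, mem_univ i, (hmemAi i R).mpr hi⟩
  have hsum : d * (2 * (d - 1)) ≤ ∑ i, (Ai i).card := by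
    calc d * (2 * (d - 1))
        = ((univ : Finset (Face d)).filter fun R => IsKFace R (d - 2)).card :=
          (card_ridges (by omega)).symm
      _ ≤ (univ.biUnion Ai).card := Finset.card_le_card hcov
      _ ≤ ∑ i, (Ai i).card := Finset.card_biUnion_le
  have hall : ∀ i, (Ai i).card = 2 * (d - 1) := by
    by_contra hne
    push_neg at hne
    obtain ⟨i0, hi0⟩ := hne
    have hlt : ∑ i, (Ai i).card < ∑ _i : Fin d, 2 * (d - 1) :=
      Finset.sum_lt_sum (fun i _ => hbound i)
        ⟨i0, mem_univ i0, lt_of_le_of_ne (hbound i0) hi0⟩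
    rw [Finset.sum_const, Finset.card_univ, Fintype.card_fin, smul_eq_mul] at hlt
    exact lt_irrefl _ (lt_of_le_of_lt hsum hlt)
  have hstar : ∀ i, ∃ p : Fin d × Bool, ∀ R ∈ Ai i, R p.1 = some p.2 := by
    intro i
    rcases classify hd (Ai i) (fun R hR => hridges i R ((hmemAi i R).mp hR))
      (fun R hR R' hR' => hcf i R ((hmemAi i R).mp hR) R' ((hmemAi i R').mp hR')) with
      h | h3
    · exact h
    · exfalso
      have := hall i
      omega
  choose p hp using hstar
  -- Find two non-center literals in distinct coordinates.
  have hScard : (univ.image p).card ≤ d := by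
    have := Finset.card_image_le (s := (univ : Finset (Fin d))) (f := p)
    simpa using this
  have hCcard : 3 ≤ (univ.image p)ᶜ.card := by
    rw [Finset.card_compl]
    have : Fintype.card (Fin d × Bool) = d * 2 := by simp
    omega
  obtain ⟨q1, hq1⟩ : ((univ.image p)ᶜ : Finset (Fin d × Bool)).Nonempty :=
    Finset.card_pos.mp (by omega)
  have hq2ex : ∃ q2 ∈ (univ.image p)ᶜ, q2.1 ≠ q1.1 := by
    by_contra hno2
    push_neg at hno2
    have hsubs : ((univ.image p)ᶜ : Finset (Fin d × Bool))
        ⊆ {(q1.1, false), (q1.1, true)} := by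
      intro r hr
      have h1 := hno2 r hr
      simp only [mem_insert, mem_singleton, Prod.ext_iff]
      cases hrb : r.2
      · exact Or.inl ⟨h1, rfl⟩
      · exact Or.inr ⟨h1, rfl⟩
    have h0 := Finset.card_le_card hsubs
    have h1 := Finset.card_insert_le ((q1.1, false) : Fin d × Bool)
      ({(q1.1, true)} : Finset (Fin d × Bool))
    have h2 : ({((q1.1, true) : Fin d × Bool)} : Finset (Fin d × Bool)).card = 1 :=
      Finset.card_singleton _
    omega
  obtain ⟨q2, hq2, hq21⟩ := hq2ex
  have hne12 : q1.1 ≠ q2.1 := fun h => hq21 h.symm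
  have hR0 : IsKFace (ridgeFace q1.1 q2.1 q1.2 q2.2) (d - 2) := ridgeFace_isRidge hne12 _ _
  obtain ⟨i, hi⟩ := hcover _ hR0
  have hlit := hp i _ ((hmemAi i _).mpr hi)
  rcases (ridgeFace_eq_some hne12).mp hlit with ⟨h1, h2⟩ | ⟨h1, h2⟩
  · apply Finset.mem_compl.mp hq1
    have : q1 = p i := Prod.ext_iff.mpr ⟨h1.symm, h2.symm⟩
    rw [this]
    exact Finset.mem_image_of_mem p (mem_univ i)
  · apply Finset.mem_compl.mp hq2
    have : q2 = p i := Prod.ext_iff.mpr ⟨h1.symm, h2.symm⟩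
    rw [this]
    exact Finset.mem_image_of_mem p (mem_univ i)
end

section
/- If two ridges of the d-cube do not contain a pair of antipodal (d-3)-faces (peaks), then either some coordinate position is fixed by both ridges at the same value, or the two ridges have disjoint sets of fixed coordinate positions. -/
open Cube

/-- two ridges containing no pair of antipodal peaks either fix some
common coordinate position at the same value, or have disjoint fixed positions. -/
theorem two_ridges_no_antipodal_peaks (d : ℕ)
    (R R' : Face d) (hR : IsKFace R (d - 2)) (hR' : IsKFace R' (d - 2))
    (hanti : ¬ ∃ P P' : Face d, IsKFace P (d - 3) ∧ Antipodal P P' ∧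
      Subface P R ∧ Subface P' R') :
    (∃ i : Fin d, ∃ b : Bool, R i = some b ∧ R' i = some b) ∨
    (∀ i : Fin d, R i = none ∨ R' i = none) := by
  by_cases hdisj : ∀ i : Fin d, R i = none ∨ R' i = none
  · exact Or.inr hdisj
  by_cases hsame : ∃ j : Fin d, ∃ c : Bool, R j = some c ∧ R' j = some c
  · exact Or.inl hsame
  exfalso
  push_neg at hdisj hsame
  obtain ⟨i, hRi, hR'i⟩ := hdisj
  -- opposite values on commonly fixed coordinates
  have opp : ∀ j e c, R j = some e → R' j = some c → e = !c := by
    intro j e c h1 h2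
    have := hsame j e h1
    rw [h2] at this
    cases e <;> cases c <;> simp_all
  -- R' has at most 2 fixed coordinates
  have hcard' : (Finset.univ.filter fun j => ¬ R' j = none).card ≤ 2 := by
    have h := Finset.card_filter_add_card_filter_not
      (s := (Finset.univ : Finset (Fin d))) (p := fun j => R' j = none)
    have h2 : (Finset.univ.filter fun j => R' j = none).card = d - 2 := hR'
    simp only [h2, Finset.card_univ, Fintype.card_fin] at h
    omega
  -- at most one coordinate is varying in R but fixed in R'
  have huniq : ∀ m₁ m₂ : Fin d, R m₁ = none → R' m₁ ≠ none →
      R m₂ = none → R' m₂ ≠ none → m₁ = m₂ := by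
    intro m₁ m₂ h1 h1' h2 h2'
    by_contra hne
    have him : i ≠ m₁ := by intro h; rw [h, h1] at hRi; exact hRi rfl
    have him2 : i ≠ m₂ := by intro h; rw [h, h2] at hRi; exact hRi rfl
    have hsub : ({i, m₁, m₂} : Finset (Fin d)) ⊆
        Finset.univ.filter fun j => ¬ R' j = none := by
      intro x hx
      simp only [Finset.mem_insert, Finset.mem_singleton] at hx
      rcases hx with rfl | rfl | rfl <;> simp [hR'i, h1', h2']
    have h3 : ({i, m₁, m₂} : Finset (Fin d)).card = 3 := by
      rw [Finset.card_insert_of_notMem (by simp [him, him2]),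
          Finset.card_insert_of_notMem (by simp [hne])]
      simp
    have := Finset.card_le_card hsub
    omega
  -- helper: building a peak from R by fixing coordinate m at value c
  have build : ∀ (m : Fin d) (c : Bool), R m = none →
      (∀ j v, R' j = some v → j = m ∨ ∃ e, R j = some e) →
      (∀ v, R' m = some v → c = !v) → False := by
    intro m c hm hfix hcv
    apply hanti
    refine ⟨Function.update R m (some c), fun j => (Function.update R m (some c) j).map (!·),
      ?_, fun j => rfl, ?_, ?_⟩
    · -- IsKFace (d-3)
      unfold IsKFace
      have hfilt : (Finset.univ.filter fun j => Function.update R m (some c) j = none)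
          = (Finset.univ.filter fun j => R j = none).erase m := by
        ext j
        rcases eq_or_ne j m with rfl | h
        · simp [Function.update_apply]
        · simp [Function.update_apply, h]
      rw [hfilt, Finset.card_erase_of_mem (by simp [hm]), hR]
      omega
    · -- Subface P R
      intro j b hj
      have : j ≠ m := by intro h; rw [h, hm] at hj; exact nomatch hj
      rw [Function.update_apply, if_neg this]; exact hj
    · -- Subface P' R'
      intro j v hj
      rcases hfix j v hj with rfl | ⟨e, he⟩
      · have := hcv v hj
        simp [Function.update_apply, this]
      · have hjm : j ≠ m := by intro h; rw [h, hm] at he; exact nomatch he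
        have := opp j e v he hj
        simp [Function.update_apply, hjm, he, this]
  by_cases hE : ∃ m : Fin d, R m = none ∧ R' m ≠ none
  · obtain ⟨m, hm, hm'⟩ := hE
    obtain ⟨v, hv⟩ := Option.ne_none_iff_exists'.mp hm'
    apply build m (!v) hm
    · intro j w hj
      by_cases hRj : R j = none
      · exact Or.inl (huniq j m hRj (by simp [hj]) hm hm')
      · exact Or.inr (Option.ne_none_iff_exists'.mp hRj)
    · intro w hw
      rw [hv] at hw
      simp_all
  · push_neg at hE
    -- every R-varying coordinate is also R'-varying
    by_cases hV : ∃ m : Fin d, R m = none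
    · obtain ⟨m, hm⟩ := hV
      apply build m true hm
      · intro j w hj
        by_cases hRj : R j = none
        · exact absurd hj (by rw [hE j hRj]; simp)
        · exact Or.inr (Option.ne_none_iff_exists'.mp hRj)
      · intro w hw
        rw [hE m hm] at hw
        exact nomatch hw
    · -- R fixes everything: d - 2 = 0, take P = R itself
      push_neg at hV
      apply hanti
      refine ⟨R, fun j => (R j).map (!·), ?_, fun j => rfl, fun j b h => h, ?_⟩
      · unfold IsKFace
        have : (Finset.univ.filter fun j => R j = none) = ∅ := by
          apply Finset.filter_eq_empty_iff.mpr
          intro j _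
          exact hV j
        unfold IsKFace at hR
        rw [this] at hR ⊢
        simp at hR ⊢
        omega
      · intro j v hj
        obtain ⟨e, he⟩ := Option.ne_none_iff_exists'.mp (hV j)
        have := opp j e v he hj
        simp only []
        rw [he]
        simp [this]
end

section
/- If a set of ridges of the 4-cube contains no pair of antipodal edges, then it contains at most four spanning ridges (ridges whose last coordinate is varying). -/
open Cube


abbrev V3 := Bool × Bool × Bool
abbrev RR := Fin 3 × Bool × Bool

def coversB : RR → V3 → Bool
  | (0, b, c), v => (v.2.1 == b) && (v.2.2 == c)
  | (1, b, c), v => (v.1 == b) && (v.2.2 == c)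
  | (2, b, c), v => (v.1 == b) && (v.2.1 == c)

def negV (v : V3) : V3 := (!v.1, !v.2.1, !v.2.2)

def decodeR : RR → Face 4
  | (0, b, c) => ![none, some b, some c, none]
  | (1, b, c) => ![some b, none, some c, none]
  | (2, b, c) => ![some b, some c, none, none]

def edgeOf (v : V3) : Face 4 := ![some v.1, some v.2.1, some v.2.2, none]

instance {d : ℕ} (F : Face d) (k : ℕ) : Decidable (IsKFace F k) :=
  inferInstanceAs (Decidable (_ = _))

instance {d : ℕ} (G F : Face d) : Decidable (Subface G F) :=
  inferInstanceAs (Decidable (∀ i b, _ → _))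

instance {d : ℕ} (F G : Face d) : Decidable (Antipodal F G) :=
  inferInstanceAs (Decidable (∀ i, _ = _))

set_option maxRecDepth 10000 in
theorem keyU : ∀ U : Finset V3, (∀ v ∈ U, negV v ∉ U) →
    (Finset.univ.filter (fun r : RR => ∀ v : V3, coversB r v → v ∈ U)).card ≤ 4 := by
  decide

theorem edge_is_1face (v : V3) : IsKFace (edgeOf v) 1 := by revert v; decide

theorem edge_antipodal (v : V3) : Antipodal (edgeOf v) (edgeOf (negV v)) := by
  revert v; decide

theorem subface_edge (r : RR) (v : V3) (h : coversB r v = true) :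
    Subface (edgeOf v) (decodeR r) := by revert r v; decide

theorem spanning_eq_decode (R : Face 4) (h3 : R 3 = none) (h2 : IsKFace R 2) :
    ∃ r : RR, decodeR r = R := by
  have hc := h2
  rw [IsKFace, Finset.card_filter, Fin.sum_univ_four, h3, if_pos rfl] at hc
  rcases e0 : R 0 with _ | b0 <;> rcases e1 : R 1 with _ | b1 <;> rcases e2 : R 2 with _ | b2 <;>
    rw [e0, e1, e2] at hc <;> simp at hc
  · exact ⟨(0, b1, b2), by funext i; fin_cases i <;> simp [decodeR, e0, e1, e2, h3]⟩
  · exact ⟨(1, b0, b2), by funext i; fin_cases i <;> simp [decodeR, e0, e1, e2, h3]⟩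
  · exact ⟨(2, b0, b1), by funext i; fin_cases i <;> simp [decodeR, e0, e1, e2, h3]⟩

/-- a set of ridges of `C^4` with no pair of antipodal edges contains
at most four spanning ridges. -/
theorem at_most_four_spanning_ridges (A : Set (Face 4))
    (hridges : ∀ R ∈ A, IsKFace R 2)
    (hanti : ¬ ∃ e e' : Face 4, IsKFace e 1 ∧ Antipodal e e' ∧
      SetContains A e ∧ SetContains A e') :
    (A ∩ {R : Face 4 | R 3 = none}).ncard ≤ 4 := by
  classical
  set s : Finset RR := Finset.univ.filter (fun r => decodeR r ∈ A) with hs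
  have hmem : ∀ r ∈ s, decodeR r ∈ A := fun r hr => (Finset.mem_filter.1 hr).2
  set U : Finset V3 := Finset.univ.filter (fun v => ∃ r ∈ s, coversB r v = true) with hU
  have hfree : ∀ v ∈ U, negV v ∉ U := by
    intro v hv hnv
    obtain ⟨r1, hr1, hc1⟩ := (Finset.mem_filter.1 hv).2
    obtain ⟨r2, hr2, hc2⟩ := (Finset.mem_filter.1 hnv).2
    exact hanti ⟨edgeOf v, edgeOf (negV v), edge_is_1face v, edge_antipodal v,
      ⟨decodeR r1, hmem r1 hr1, subface_edge r1 v hc1⟩,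
      ⟨decodeR r2, hmem r2 hr2, subface_edge r2 (negV v) hc2⟩⟩
  have hsubs : s ⊆ Finset.univ.filter (fun r : RR => ∀ v : V3, coversB r v → v ∈ U) := by
    intro r hr
    refine Finset.mem_filter.2 ⟨Finset.mem_univ _, fun v hc => ?_⟩
    exact Finset.mem_filter.2 ⟨Finset.mem_univ _, ⟨r, hr, hc⟩⟩
  have hcard : s.card ≤ 4 := le_trans (Finset.card_le_card hsubs) (keyU U hfree)
  have hsub : A ∩ {R : Face 4 | R 3 = none} ⊆ ↑(s.image decodeR) := by
    rintro R ⟨hA, h3⟩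
    obtain ⟨r, hr⟩ := spanning_eq_decode R h3 (hridges R hA)
    exact Finset.mem_coe.2 (Finset.mem_image.2
      ⟨r, Finset.mem_filter.2 ⟨Finset.mem_univ _, hr ▸ hA⟩, hr⟩)
  calc (A ∩ {R : Face 4 | R 3 = none}).ncard
      ≤ (↑(s.image decodeR) : Set (Face 4)).ncard :=
        Set.ncard_le_ncard hsub (s.image decodeR).finite_toSet
    _ = (s.image decodeR).card := Set.ncard_coe_finset _
    _ ≤ s.card := Finset.card_image_le
    _ ≤ 4 := hcard
end

section
/- A set of ridges of the 4-cube that contains no pair of antipodal edges has at most six ridges. -/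
open Cube Finset

namespace AntipodalAux

/-- Two ridges conflict: they share a varying coordinate and are flipped on every
commonly fixed coordinate. -/
def Conf (R R' : Face 4) : Prop :=
  (∃ l, R l = none ∧ R' l = none) ∧
  ∀ i b b', R i = some b → R' i = some b' → b' = !b

lemma fixed_filter_card {R : Face 4} (h : IsKFace R 2) :
    (Finset.univ.filter fun i => R i ≠ none).card = 2 := by
  have key := Finset.card_filter_add_card_filter_not
    (s := (Finset.univ : Finset (Fin 4))) (p := fun i => R i = none)
  have h4 : (Finset.univ : Finset (Fin 4)).card = 4 := by decide
  have h2 : (Finset.univ.filter fun i => R i = none).card = 2 := h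
  have : (Finset.univ.filter fun i => ¬ R i = none).card = 2 := by omega
  simpa using this

lemma three_nones_false {R : Face 4} (h : IsKFace R 2) {a b c : Fin 4}
    (hab : a ≠ b) (hac : a ≠ c) (hbc : b ≠ c)
    (ha : R a = none) (hb : R b = none) (hc : R c = none) : False := by
  have hsub : ({a, b, c} : Finset (Fin 4)) ⊆ Finset.univ.filter (fun i => R i = none) := by
    intro m hm
    simp only [Finset.mem_insert, Finset.mem_singleton] at hm
    rcases hm with rfl | rfl | rfl <;> simp [ha, hb, hc]
  have hc3 : ({a, b, c} : Finset (Fin 4)).card = 3 := by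
    rw [Finset.card_insert_of_notMem (by simp [hab, hac]),
      Finset.card_insert_of_notMem (by simp [hbc])]
    simp
  have := Finset.card_le_card hsub
  rw [h, hc3] at this
  omega

lemma three_fixed_false {R : Face 4} (h : IsKFace R 2) {a b c : Fin 4}
    (hab : a ≠ b) (hac : a ≠ c) (hbc : b ≠ c)
    (ha : R a ≠ none) (hb : R b ≠ none) (hc : R c ≠ none) : False := by
  have hsub : ({a, b, c} : Finset (Fin 4)) ⊆ Finset.univ.filter (fun i => R i ≠ none) := by
    intro m hm
    simp only [Finset.mem_insert, Finset.mem_singleton] at hm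
    rcases hm with rfl | rfl | rfl <;> simp [ha, hb, hc]
  have hc3 : ({a, b, c} : Finset (Fin 4)).card = 3 := by
    rw [Finset.card_insert_of_notMem (by simp [hab, hac]),
      Finset.card_insert_of_notMem (by simp [hbc])]
    simp
  have := Finset.card_le_card hsub
  rw [fixed_filter_card h, hc3] at this
  omega

lemma fixed_eq {R : Face 4} (h : IsKFace R 2) {i j : Fin 4} (hij : i ≠ j)
    (hi : R i ≠ none) (hj : R j ≠ none) : ∀ m, m ≠ i → m ≠ j → R m = none := by
  intro m h1 h2
  by_contra hm
  exact three_fixed_false h hij (Ne.symm h1) (Ne.symm h2) hi hj hm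

lemma nones_eq {R : Face 4} (h : IsKFace R 2) {k l : Fin 4} (hkl : k ≠ l)
    (hk : R k = none) (hl : R l = none) : ∀ m, m ≠ k → m ≠ l → R m ≠ none := by
  intro m h1 h2 hm
  exact three_nones_false h hkl (Ne.symm h1) (Ne.symm h2) hk hl hm

lemma exists_other_fixed {R : Face 4} (h : IsKFace R 2) {i : Fin 4} (hi : R i ≠ none) :
    ∃ j, j ≠ i ∧ R j ≠ none := by
  have h2 := fixed_filter_card h
  obtain ⟨j, hj, hne⟩ := Finset.exists_mem_ne
    (s := Finset.univ.filter fun j => R j ≠ none) (by omega) i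
  exact ⟨j, hne, (Finset.mem_filter.mp hj).2⟩

lemma common_none {R R' : Face 4} (h : IsKFace R 2) (h' : IsKFace R' 2) {i : Fin 4}
    (hi : R i ≠ none) (hi' : R' i ≠ none) : ∃ l, R l = none ∧ R' l = none := by
  set N := Finset.univ.filter fun m => R m = none with hN
  set N' := Finset.univ.filter fun m => R' m = none with hN'
  have hsub : N ∪ N' ⊆ Finset.univ.erase i := by
    intro m hm
    rcases Finset.mem_union.mp hm with hm | hm
    · have := (Finset.mem_filter.mp hm).2
      refine Finset.mem_erase.mpr ⟨fun e => hi (e ▸ this), Finset.mem_univ _⟩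
    · have := (Finset.mem_filter.mp hm).2
      refine Finset.mem_erase.mpr ⟨fun e => hi' (e ▸ this), Finset.mem_univ _⟩
  have hcu : (N ∪ N').card ≤ 3 := by
    have := Finset.card_le_card hsub
    simpa using this
  have hkey := Finset.card_union_add_card_inter N N'
  have hNc : N.card = 2 := h
  have hN'c : N'.card = 2 := h'
  have hpos : 0 < (N ∩ N').card := by omega
  obtain ⟨l, hl⟩ := Finset.card_pos.mp hpos
  rw [Finset.mem_inter] at hl
  exact ⟨l, (Finset.mem_filter.mp hl.1).2, (Finset.mem_filter.mp hl.2).2⟩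

/-- From a conflict between members of `A`, construct antipodal edges. -/
lemma noConf {A : Set (Face 4)}
    (hanti : ¬ ∃ e e' : Face 4, IsKFace e 1 ∧ Antipodal e e' ∧
      SetContains A e ∧ SetContains A e') :
    ∀ R ∈ A, ∀ R' ∈ A, ¬ Conf R R' := by
  rintro R hR R' hR' ⟨⟨l, hl, hl'⟩, hflip⟩
  apply hanti
  classical
  set e : Face 4 := fun i => if i = l then none else
    match R i, R' i with
    | some b, _ => some b
    | none, some b' => some (!b')
    | none, none => some true with he
  refine ⟨e, fun i => (e i).map (!·), ?_, fun i => rfl, ⟨R, hR, ?_⟩, ⟨R', hR', ?_⟩⟩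
  · -- IsKFace e 1
    have hset : (Finset.univ.filter fun i => e i = none) = {l} := by
      ext m
      simp only [Finset.mem_filter, Finset.mem_univ, true_and, Finset.mem_singleton]
      constructor
      · intro hm
        by_contra hml
        rw [he] at hm
        simp only [if_neg hml] at hm
        rcases h1 : R m with _ | b <;> rcases h2 : R' m with _ | b' <;>
          rw [h1, h2] at hm <;> simp at hm
      · rintro rfl; simp [he]
    show (Finset.univ.filter fun i => e i = none).card = 1
    rw [hset]; rfl
  · -- Subface e R
    intro i b hib
    have hil : i ≠ l := fun h => by rw [h, hl] at hib; exact nomatch hib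
    rw [he]
    simp only [if_neg hil]
    rw [hib]
  · -- Subface e' R'
    intro i b' hib'
    have hil : i ≠ l := fun h => by rw [h, hl'] at hib'; exact nomatch hib'
    have hei : e i = some (!b') := by
      rw [he]
      simp only [if_neg hil]
      rcases h1 : R i with _ | b
      · rw [hib']
      · have := hflip i b b' h1 hib'
        rw [this, Bool.not_not]
    show Option.map (!·) (e i) = some b'
    rw [hei]
    simp

section Counting

variable {s : Finset (Face 4)}

/-- the members of `s` fixing coordinate `i` -/
def Fi (s : Finset (Face 4)) (i : Fin 4) : Finset (Face 4) :=
  s.filter fun R => R i ≠ none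

/-- the members of `s` fixing coordinates `i` and `j` -/
def Fij (s : Finset (Face 4)) (i j : Fin 4) : Finset (Face 4) :=
  s.filter fun R => R i ≠ none ∧ R j ≠ none

variable (h2 : ∀ R ∈ s, IsKFace R 2) (hnc : ∀ R ∈ s, ∀ R' ∈ s, ¬ Conf R R')

include h2 hnc in
lemma flip_pair {R R' : Face 4} (hRs : R ∈ s) (hR's : R' ∈ s) {i : Fin 4} {b : Bool}
    (hRi : R i = some b) (hR'i : R' i = some (!b)) :
    ∃ j, j ≠ i ∧ ∃ a, R j = some a ∧ R' j = some a := by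
  have h2R := h2 R hRs
  have h2R' := h2 R' hR's
  obtain ⟨j, hji, hj⟩ := exists_other_fixed h2R (by rw [hRi]; exact nofun)
  obtain ⟨k, hki, hk⟩ := exists_other_fixed h2R' (by rw [hR'i]; exact nofun)
  have hcn : ∃ l, R l = none ∧ R' l = none :=
    common_none h2R h2R' (i := i) (by rw [hRi]; exact nofun)
      (by rw [hR'i]; exact nofun)
  by_cases hjk : j = k
  · subst hjk
    rcases ha : R j with _ | a; · exact absurd ha hj
    rcases ha' : R' j with _ | a'; · exact absurd ha' hk
    by_cases haa : a' = a
    · exact ⟨j, hji, a, ha, haa ▸ ha'⟩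
    · have haa' : a' = !a := by cases a <;> cases a' <;> simp_all
      exfalso
      apply hnc R hRs R' hR's
      refine ⟨hcn, ?_⟩
      intro m bm bm' hm hm'
      by_cases hmi : m = i
      · subst hmi
        rw [hRi] at hm; rw [hR'i] at hm'
        rw [← Option.some_inj.mp hm, ← Option.some_inj.mp hm']
      · by_cases hmj : m = j
        · subst hmj
          rw [ha] at hm; rw [ha'] at hm'
          rw [← Option.some_inj.mp hm, ← Option.some_inj.mp hm', haa']
        · have := fixed_eq h2R (Ne.symm hji) (by rw [hRi]; exact nofun) hj
            m hmi hmj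
          rw [this] at hm; exact nomatch hm
  · exfalso
    apply hnc R hRs R' hR's
    refine ⟨hcn, ?_⟩
    intro m bm bm' hm hm'
    by_cases hmi : m = i
    · subst hmi
      rw [hRi] at hm; rw [hR'i] at hm'
      rw [← Option.some_inj.mp hm, ← Option.some_inj.mp hm']
    · exfalso
      have hmj : m = j := by
        by_contra hmj
        have := fixed_eq h2R (Ne.symm hji) (by rw [hRi]; exact nofun) hj m hmi hmj
        rw [this] at hm; exact nomatch hm
      have hmk : m = k := by
        by_contra hmk
        have := fixed_eq h2R' (Ne.symm hki) (by rw [hR'i]; exact nofun) hk m hmi hmk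
        rw [this] at hm'; exact nomatch hm'
      exact hjk (hmj ▸ hmk)

include h2 hnc in
lemma big_of_three {i : Fin 4} (h3 : 3 ≤ (Fi s i).card) :
    ∃ b, ∀ R ∈ s, R i ≠ none → R i = some b := by
  by_contra hno
  push_neg at hno
  -- pick R1 in Fi s i
  have hne : (Fi s i).Nonempty := Finset.card_pos.mp (by omega)
  obtain ⟨R1, hR1⟩ := hne
  obtain ⟨hR1s, hR1fix⟩ := Finset.mem_filter.mp hR1
  rcases hb1 : R1 i with _ | b1; · exact absurd hb1 hR1fix
  obtain ⟨R2, hR2s, hR2fix, hR2ne⟩ := hno b1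
  rcases hb2 : R2 i with _ | b2; · exact absurd hb2 hR2fix
  have hb2' : b2 = !b1 := by
    have : b2 ≠ b1 := fun h => hR2ne (by rw [hb2, h])
    cases b1 <;> cases b2 <;> simp_all
  rw [hb2'] at hb2
  obtain ⟨j, hji, a, hR1j, hR2j⟩ := flip_pair h2 hnc hR1s hR2s hb1 hb2
  have hsub : Fi s i ⊆ {R1, R2} := by
    intro R hR
    obtain ⟨hRs, hRfix⟩ := Finset.mem_filter.mp hR
    rcases hRi : R i with _ | c; · exact absurd hRi hRfix
    have h2R := h2 R hRs
    have h2R1 := h2 R1 hR1s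
    have h2R2 := h2 R2 hR2s
    simp only [Finset.mem_insert, Finset.mem_singleton]
    by_cases hcb : c = b1
    · -- R = R1
      rw [hcb] at hRi
      obtain ⟨j', hj'i, a', hRj', hR2j'⟩ := flip_pair h2 hnc hRs hR2s hRi hb2
      have hj'j : j' = j := by
        by_contra hne'
        have := fixed_eq h2R2 (Ne.symm hji) (by rw [hb2]; exact nofun)
          (by rw [hR2j]; exact nofun) j' hj'i hne'
        rw [this] at hR2j'; exact nomatch hR2j'
      subst hj'j
      have haa : a' = a := Option.some_inj.mp (hR2j' ▸ hR2j)
      left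
      funext m
      by_cases hmi : m = i
      · rw [hmi, hRi, hb1]
      · by_cases hmj : m = j'
        · rw [hmj, hRj', hR1j, haa]
        · rw [fixed_eq h2R (Ne.symm hj'i) (by rw [hRi]; exact nofun)
            (by rw [hRj']; exact nofun) m hmi hmj,
            fixed_eq h2R1 (Ne.symm hji) (by rw [hb1]; exact nofun)
            (by rw [hR1j]; exact nofun) m hmi hmj]
    · -- R = R2
      have hcb' : c = !b1 := by cases b1 <;> cases c <;> simp_all
      rw [hcb'] at hRi
      obtain ⟨j', hj'i, a', hR1j', hRj'⟩ := flip_pair h2 hnc hR1s hRs hb1 hRi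
      have hj'j : j' = j := by
        by_contra hne'
        have := fixed_eq h2R1 (Ne.symm hji) (by rw [hb1]; exact nofun)
          (by rw [hR1j]; exact nofun) j' hj'i hne'
        rw [this] at hR1j'; exact nomatch hR1j'
      subst hj'j
      have haa : a' = a := Option.some_inj.mp (hR1j' ▸ hR1j)
      right
      funext m
      by_cases hmi : m = i
      · rw [hmi, hRi, hb2]
      · by_cases hmj : m = j'
        · rw [hmj, hRj', hR2j, haa]
        · rw [fixed_eq h2R (Ne.symm hj'i) (by rw [hRi]; exact nofun)
            (by rw [hRj']; exact nofun) m hmi hmj,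
            fixed_eq h2R2 (Ne.symm hji) (by rw [hb2]; exact nofun)
            (by rw [hR2j]; exact nofun) m hmi hmj]
  have hle := Finset.card_le_card hsub
  have : ({R1, R2} : Finset (Face 4)).card ≤ 2 :=
    le_trans (Finset.card_insert_le _ _) (by simp)
  omega

include h2 in
lemma pair_card {i j : Fin 4} (hij : i ≠ j) {bi bj : Bool}
    (hbi : ∀ R ∈ s, R i ≠ none → R i = some bi)
    (hbj : ∀ R ∈ s, R j ≠ none → R j = some bj) :
    (Fij s i j).card ≤ 1 := by
  rw [Finset.card_le_one]
  intro R hR R' hR'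
  obtain ⟨hRs, hRi, hRj⟩ := Finset.mem_filter.mp hR
  obtain ⟨hR's, hR'i, hR'j⟩ := Finset.mem_filter.mp hR'
  funext m
  by_cases hmi : m = i
  · rw [hmi, hbi R hRs hRi, hbi R' hR's hR'i]
  · by_cases hmj : m = j
    · rw [hmj, hbj R hRs hRj, hbj R' hR's hR'j]
    · rw [fixed_eq (h2 R hRs) hij hRi hRj m hmi hmj,
        fixed_eq (h2 R' hR's) hij hR'i hR'j m hmi hmj]

include h2 in
lemma sum_F : (Fi s 0).card + (Fi s 1).card + (Fi s 2).card + (Fi s 3).card = 2 * s.card := by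
  have key : ∑ i : Fin 4, (Fi s i).card = 2 * s.card := by
    have step1 : ∀ i : Fin 4, (Fi s i).card = ∑ R ∈ s, if R i ≠ none then 1 else 0 := by
      intro i; rw [Fi, Finset.card_filter]
    calc ∑ i : Fin 4, (Fi s i).card
        = ∑ i : Fin 4, ∑ R ∈ s, if R i ≠ none then 1 else 0 := by
          exact Finset.sum_congr rfl fun i _ => step1 i
      _ = ∑ R ∈ s, ∑ i : Fin 4, if R i ≠ none then 1 else 0 := Finset.sum_comm
      _ = ∑ R ∈ s, (Finset.univ.filter fun i => R i ≠ none).card := by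
          exact Finset.sum_congr rfl fun R _ => (Finset.card_filter _ _).symm
      _ = ∑ R ∈ s, 2 := Finset.sum_congr rfl fun R hR => fixed_filter_card (h2 R hR)
      _ = 2 * s.card := by rw [Finset.sum_const, smul_eq_mul, mul_comm]
  rw [← key, Fin.sum_univ_four]

include h2 in
lemma cover2 {i j k l : Fin 4}
    (hcov : ∀ m : Fin 4, m = i ∨ m = j ∨ m = k ∨ m = l)
    (hik : i ≠ k) (hil : i ≠ l) (hjk : j ≠ k) (hjl : j ≠ l) (hkl : k ≠ l) :
    s.card ≤ (Fij s i j).card + (Fi s k).card + (Fi s l).card := by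
  have hsub : s ⊆ Fij s i j ∪ Fi s k ∪ Fi s l := by
    intro R hR
    by_cases hk : R k ≠ none
    · exact Finset.mem_union.mpr (Or.inl (Finset.mem_union.mpr
        (Or.inr (Finset.mem_filter.mpr ⟨hR, hk⟩))))
    by_cases hl : R l ≠ none
    · exact Finset.mem_union.mpr (Or.inr (Finset.mem_filter.mpr ⟨hR, hl⟩))
    push_neg at hk hl
    have h2R := h2 R hR
    have hi : R i ≠ none := nones_eq h2R hkl hk hl i hik hil
    have hj : R j ≠ none := nones_eq h2R hkl hk hl j hjk hjl
    exact Finset.mem_union.mpr (Or.inl (Finset.mem_union.mpr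
      (Or.inl (Finset.mem_filter.mpr ⟨hR, hi, hj⟩))))
  calc s.card ≤ (Fij s i j ∪ Fi s k ∪ Fi s l).card := Finset.card_le_card hsub
    _ ≤ (Fij s i j ∪ Fi s k).card + (Fi s l).card := Finset.card_union_le _ _
    _ ≤ (Fij s i j).card + (Fi s k).card + (Fi s l).card := by
        have := Finset.card_union_le (Fij s i j) (Fi s k); omega

include h2 in
lemma cover3 {i j k l : Fin 4}
    (hcov : ∀ m : Fin 4, m = i ∨ m = j ∨ m = k ∨ m = l)
    (hij : i ≠ j) (hik : i ≠ k) (hil : i ≠ l) (hjk : j ≠ k) (hjl : j ≠ l) (hkl : k ≠ l) :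
    s.card ≤ (Fij s i j).card + (Fij s i k).card + (Fij s j k).card + (Fi s l).card := by
  have hsub : s ⊆ Fij s i j ∪ Fij s i k ∪ Fij s j k ∪ Fi s l := by
    intro R hR
    have h2R := h2 R hR
    by_cases hl : R l ≠ none
    · exact Finset.mem_union.mpr (Or.inr (Finset.mem_filter.mpr ⟨hR, hl⟩))
    push_neg at hl
    by_cases hi : R i = none
    · have hj : R j ≠ none := nones_eq h2R (Ne.symm hil) hl hi j hjl (Ne.symm hij)
      have hk : R k ≠ none := nones_eq h2R (Ne.symm hil) hl hi k hkl (Ne.symm hik)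
      exact Finset.mem_union.mpr (Or.inl (Finset.mem_union.mpr (Or.inr
        (Finset.mem_filter.mpr ⟨hR, hj, hk⟩))))
    by_cases hj : R j = none
    · have hk : R k ≠ none := nones_eq h2R (Ne.symm hjl) hl hj k hkl (Ne.symm hjk)
      exact Finset.mem_union.mpr (Or.inl (Finset.mem_union.mpr (Or.inl
        (Finset.mem_union.mpr (Or.inr (Finset.mem_filter.mpr ⟨hR, hi, hk⟩))))))
    · exact Finset.mem_union.mpr (Or.inl (Finset.mem_union.mpr (Or.inl
        (Finset.mem_union.mpr (Or.inl (Finset.mem_filter.mpr ⟨hR, hi, hj⟩))))))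
  calc s.card ≤ (Fij s i j ∪ Fij s i k ∪ Fij s j k ∪ Fi s l).card := Finset.card_le_card hsub
    _ ≤ (Fij s i j).card + (Fij s i k).card + (Fij s j k).card + (Fi s l).card := by
        have a1 := Finset.card_union_le (Fij s i j ∪ Fij s i k ∪ Fij s j k) (Fi s l)
        have a2 := Finset.card_union_le (Fij s i j ∪ Fij s i k) (Fij s j k)
        have a3 := Finset.card_union_le (Fij s i j) (Fij s i k)
        omega

include h2 in
lemma Fl_sub {i j k l : Fin 4}
    (hcov : ∀ m : Fin 4, m = i ∨ m = j ∨ m = k ∨ m = l) :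
    Fi s l ⊆ Fij s i l ∪ Fij s j l ∪ Fij s k l := by
  intro R hR
  obtain ⟨hRs, hl⟩ := Finset.mem_filter.mp hR
  obtain ⟨m, hml, hm⟩ := exists_other_fixed (h2 R hRs) hl
  rcases hcov m with rfl | rfl | rfl | rfl
  · exact Finset.mem_union.mpr (Or.inl (Finset.mem_union.mpr (Or.inl
      (Finset.mem_filter.mpr ⟨hRs, hm, hl⟩))))
  · exact Finset.mem_union.mpr (Or.inl (Finset.mem_union.mpr (Or.inr
      (Finset.mem_filter.mpr ⟨hRs, hm, hl⟩))))
  · exact Finset.mem_union.mpr (Or.inr (Finset.mem_filter.mpr ⟨hRs, hm, hl⟩))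
  · exact absurd rfl hml

include h2 hnc in
lemma main_bound : s.card ≤ 6 := by
  classical
  have hsum := sum_F h2
  have hle : ∀ i, (Fi s i).card ≤ s.card := fun i => Finset.card_filter_le _ _
  have hsb : ∀ i : Fin 4, (Fi s i).card ≤ 2 ∨ ∃ b, ∀ R ∈ s, R i ≠ none → R i = some b := by
    intro i
    by_cases h : 3 ≤ (Fi s i).card
    · exact Or.inr (big_of_three h2 hnc h)
    · exact Or.inl (by omega)
  -- helper to finish "two big, two small" cases
  have two_big : ∀ i j k l : Fin 4, (∀ m : Fin 4, m = i ∨ m = j ∨ m = k ∨ m = l) →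
      i ≠ j → i ≠ k → i ≠ l → j ≠ k → j ≠ l → k ≠ l →
      (∃ b, ∀ R ∈ s, R i ≠ none → R i = some b) →
      (∃ b, ∀ R ∈ s, R j ≠ none → R j = some b) →
      (Fi s k).card ≤ 2 → (Fi s l).card ≤ 2 → s.card ≤ 6 := by
    intro i j k l hcov hij hik hil hjk hjl hkl ⟨bi, hbi⟩ ⟨bj, hbj⟩ hk hl
    have hc := cover2 h2 hcov hik hil hjk hjl hkl
    have hp := pair_card h2 hij hbi hbj
    omega
  have three_big : ∀ i j k l : Fin 4, (∀ m : Fin 4, m = i ∨ m = j ∨ m = k ∨ m = l) →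
      i ≠ j → i ≠ k → i ≠ l → j ≠ k → j ≠ l → k ≠ l →
      (∃ b, ∀ R ∈ s, R i ≠ none → R i = some b) →
      (∃ b, ∀ R ∈ s, R j ≠ none → R j = some b) →
      (∃ b, ∀ R ∈ s, R k ≠ none → R k = some b) →
      (Fi s l).card ≤ 3 → s.card ≤ 6 := by
    intro i j k l hcov hij hik hil hjk hjl hkl ⟨bi, hbi⟩ ⟨bj, hbj⟩ ⟨bk, hbk⟩ hl
    have hc := cover3 h2 hcov hij hik hil hjk hjl hkl
    have p1 := pair_card h2 hij hbi hbj
    have p2 := pair_card h2 hik hbi hbk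
    have p3 := pair_card h2 hjk hbj hbk
    omega
  have big_Fl : ∀ i j k l : Fin 4, (∀ m : Fin 4, m = i ∨ m = j ∨ m = k ∨ m = l) →
      i ≠ l → j ≠ l → k ≠ l →
      (∃ b, ∀ R ∈ s, R i ≠ none → R i = some b) →
      (∃ b, ∀ R ∈ s, R j ≠ none → R j = some b) →
      (∃ b, ∀ R ∈ s, R k ≠ none → R k = some b) →
      (∃ b, ∀ R ∈ s, R l ≠ none → R l = some b) →
      (Fi s l).card ≤ 3 := by
    intro i j k l hcov hil hjl hkl ⟨bi, hbi⟩ ⟨bj, hbj⟩ ⟨bk, hbk⟩ ⟨bl, hbl⟩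
    have hsub := Fl_sub h2 hcov
    have p1 := pair_card h2 hil hbi hbl
    have p2 := pair_card h2 hjl hbj hbl
    have p3 := pair_card h2 hkl hbk hbl
    have hc := Finset.card_le_card hsub
    have a1 := Finset.card_union_le (Fij s i l ∪ Fij s j l) (Fij s k l)
    have a2 := Finset.card_union_le (Fij s i l) (Fij s j l)
    omega
  rcases hsb 0 with h0 | h0 <;> rcases hsb 1 with h1 | h1 <;>
    rcases hsb 2 with hc2 | hc2 <;> rcases hsb 3 with h3 | h3
  -- SSSS
  · omega
  -- SSSB
  · have := hle 3; omega
  -- SSBS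
  · have := hle 2; omega
  -- SSBB : big 2,3; small 0,1
  · exact two_big 2 3 0 1 (by decide) (by decide) (by decide) (by decide) (by decide)
      (by decide) (by decide) hc2 h3 h0 h1
  -- SBSS
  · have := hle 1; omega
  -- SBSB : big 1,3; small 0,2
  · exact two_big 1 3 0 2 (by decide) (by decide) (by decide) (by decide) (by decide)
      (by decide) (by decide) h1 h3 h0 hc2
  -- SBBS : big 1,2; small 0,3
  · exact two_big 1 2 0 3 (by decide) (by decide) (by decide) (by decide) (by decide)
      (by decide) (by decide) h1 hc2 h0 h3
  -- SBBB : big 1,2,3; small 0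
  · exact three_big 1 2 3 0 (by decide) (by decide) (by decide) (by decide) (by decide)
      (by decide) (by decide) h1 hc2 h3 (by omega)
  -- BSSS
  · have := hle 0; omega
  -- BSSB : big 0,3; small 1,2
  · exact two_big 0 3 1 2 (by decide) (by decide) (by decide) (by decide) (by decide)
      (by decide) (by decide) h0 h3 h1 hc2
  -- BSBS : big 0,2; small 1,3
  · exact two_big 0 2 1 3 (by decide) (by decide) (by decide) (by decide) (by decide)
      (by decide) (by decide) h0 hc2 h1 h3
  -- BSBB : big 0,2,3; small 1
  · exact three_big 0 2 3 1 (by decide) (by decide) (by decide) (by decide) (by decide)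
      (by decide) (by decide) h0 hc2 h3 (by omega)
  -- BBSS : big 0,1; small 2,3
  · exact two_big 0 1 2 3 (by decide) (by decide) (by decide) (by decide) (by decide)
      (by decide) (by decide) h0 h1 hc2 h3
  -- BBSB : big 0,1,3; small 2
  · exact three_big 0 1 3 2 (by decide) (by decide) (by decide) (by decide) (by decide)
      (by decide) (by decide) h0 h1 h3 (by omega)
  -- BBBS : big 0,1,2; small 3
  · exact three_big 0 1 2 3 (by decide) (by decide) (by decide) (by decide) (by decide)
      (by decide) (by decide) h0 h1 hc2 (by omega)
  -- BBBB : all big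
  · exact three_big 0 1 2 3 (by decide) (by decide) (by decide) (by decide) (by decide)
      (by decide) (by decide) h0 h1 hc2
      (big_Fl 0 1 2 3 (by decide) (by decide) (by decide) (by decide) h0 h1 hc2 h3)

end Counting

end AntipodalAux

open AntipodalAux

/-- a set of ridges of `C^4` with no pair of antipodal edges has at
most six ridges. -/
theorem no_antipodal_edges_at_most_six (A : Set (Face 4))
    (hridges : ∀ R ∈ A, IsKFace R 2)
    (hanti : ¬ ∃ e e' : Face 4, IsKFace e 1 ∧ Antipodal e e' ∧
      SetContains A e ∧ SetContains A e') :
    A.ncard ≤ 6 := by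
  classical
  have hfin : A.Finite := Set.toFinite A
  have hnc := noConf hanti
  rw [Set.ncard_eq_toFinset_card A hfin]
  apply main_bound
  · intro R hR
    exact hridges R (hfin.mem_toFinset.mp hR)
  · intro R hR R' hR'
    exact hnc R (hfin.mem_toFinset.mp hR) R' (hfin.mem_toFinset.mp hR')
end

section
/- Suppose A_1,...,A_4 is a cover of the ridges of the 4-cube by four sets of ridges, and A_1 consists precisely of the six ridges of a single facet. Then some set A_j (j ≥ 2) contains a pair of antipodal edges. -/
open Cube

/- ### Auxiliary combinatorics -/

instance {d k : ℕ} (F : Face d) : Decidable (IsKFace F k) := by unfold IsKFace; infer_instance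
instance inst_s13 {d : ℕ} (G F : Face d) : Decidable (Subface G F) := by unfold Subface; infer_instance
instance inst_s13_2 {d : ℕ} (F G : Face d) : Decidable (Antipodal F G) := by unfold Antipodal; infer_instance


abbrev Ridge3 := Fin 3 × Bool × Bool

def neg3 (w : V3) : V3 := (!w.1, !w.2.1, !w.2.2)

def touches : Ridge3 → V3 → Bool
  | (0, s, t), (_, y, z) => y == s && z == t
  | (1, s, t), (x, _, z) => x == s && z == t
  | (2, s, t), (x, y, _) => x == s && y == t

set_option maxRecDepth 100000 in
set_option synthInstance.maxSize 2000 in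
set_option synthInstance.maxHeartbeats 2000000 in
set_option maxHeartbeats 8000000 in
theorem core9 : ∀ c0 c1 c2 c4 c5 c7 c9 c10 c11 : Fin 3, c0 = c5 ∨ c0 = c7 ∨ c0 = c9 ∨ c0 = c11 ∨ c1 = c2 ∨ c1 = c4 ∨ c1 = c9 ∨ c1 = c11 ∨ c2 = c5 ∨ c2 = c7 ∨ c2 = c10 ∨ c4 = c7 ∨ c4 = c10 ∨ c4 = c11 ∨ c5 = c10 ∨ c5 = c11 ∨ c7 = c9 ∨ c9 = c10 := by decide

theorem core (col : Ridge3 → Fin 3) :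
    ∃ r1 r2 w, touches r1 w = true ∧ touches r2 (neg3 w) = true ∧ col r1 = col r2 := by
  rcases core9 (col (0, false, false)) (col (0, false, true)) (col (0, true, false))
    (col (1, false, false)) (col (1, false, true)) (col (1, true, true))
    (col (2, false, true)) (col (2, true, false)) (col (2, true, true)) with
    h|h|h|h|h|h|h|h|h|h|h|h|h|h|h|h|h|h
  · exact ⟨(0, false, false), (1, false, true), (true, false, false), by decide, by decide, h⟩
  · exact ⟨(0, false, false), (1, true, true), (false, false, false), by decide, by decide, h⟩
  · exact ⟨(0, false, false), (2, false, true), (true, false, false), by decide, by decide, h⟩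
  · exact ⟨(0, false, false), (2, true, true), (false, false, false), by decide, by decide, h⟩
  · exact ⟨(0, false, true), (0, true, false), (false, false, true), by decide, by decide, h⟩
  · exact ⟨(0, false, true), (1, false, false), (true, false, true), by decide, by decide, h⟩
  · exact ⟨(0, false, true), (2, false, true), (true, false, true), by decide, by decide, h⟩
  · exact ⟨(0, false, true), (2, true, true), (false, false, true), by decide, by decide, h⟩
  · exact ⟨(0, true, false), (1, false, true), (true, true, false), by decide, by decide, h⟩
  · exact ⟨(0, true, false), (1, true, true), (false, true, false), by decide, by decide, h⟩
  · exact ⟨(0, true, false), (2, true, false), (false, true, false), by decide, by decide, h⟩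
  · exact ⟨(1, false, false), (1, true, true), (false, false, false), by decide, by decide, h⟩
  · exact ⟨(1, false, false), (2, true, false), (false, true, false), by decide, by decide, h⟩
  · exact ⟨(1, false, false), (2, true, true), (false, false, false), by decide, by decide, h⟩
  · exact ⟨(1, false, true), (2, true, false), (false, true, true), by decide, by decide, h⟩
  · exact ⟨(1, false, true), (2, true, true), (false, false, true), by decide, by decide, h⟩
  · exact ⟨(1, true, true), (2, false, true), (true, false, true), by decide, by decide, h⟩
  · exact ⟨(2, false, true), (2, true, false), (false, true, false), by decide, by decide, h⟩

/-- The spanning ridge determined by a direction among `{a,b,c}` and two fixed values,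
varying also in coordinate `i₀`. -/
def spanRidge (a b c : Fin 4) : Ridge3 → Face 4
  | (0, s, t) => fun i => if i = b then some s else if i = c then some t else none
  | (1, s, t) => fun i => if i = a then some s else if i = c then some t else none
  | (2, s, t) => fun i => if i = a then some s else if i = b then some t else none

/-- The spanning edge varying only in the coordinate outside `{a,b,c}`. -/
def spanEdge (a b c : Fin 4) (w : V3) : Face 4 :=
  fun i => if i = a then some w.1 else if i = b then some w.2.1 else if i = c then some w.2.2
    else none

def t3 : Fin 4 → Fin 3 := fun x => if x = 1 then 0 else if x = 2 then 1 else 2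

theorem helper (A : Fin 4 → Set (Face 4))
    (hcover : ∀ R : Face 4, IsKFace R 2 → ∃ i, R ∈ A i)
    (F : Face 4) (hA0 : A 0 = {R | IsKFace R 2 ∧ Subface R F})
    (i₀ a b c : Fin 4) (b₀ : Bool) (hFi : F i₀ = some b₀)
    (h2 : ∀ r, IsKFace (spanRidge a b c r) 2)
    (hnone : ∀ r, spanRidge a b c r i₀ = none)
    (h1 : ∀ w, IsKFace (spanEdge a b c w) 1)
    (hanti : ∀ w, Antipodal (spanEdge a b c w) (spanEdge a b c (neg3 w)))
    (hsub : ∀ r w, touches r w = true → Subface (spanEdge a b c w) (spanRidge a b c r)) :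
    ∃ j : Fin 4, j ≠ 0 ∧ ∃ e e' : Face 4, IsKFace e 1 ∧ Antipodal e e' ∧
      SetContains (A j) e ∧ SetContains (A j) e' := by
  have hchoice : ∀ r : Ridge3, ∃ j : Fin 4, j ≠ 0 ∧ spanRidge a b c r ∈ A j := by
    intro r
    obtain ⟨j, hj⟩ := hcover _ (h2 r)
    refine ⟨j, ?_, hj⟩
    rintro rfl
    rw [hA0] at hj
    have := hj.2 i₀ b₀ hFi
    rw [hnone r] at this
    exact absurd this.symm (Option.some_ne_none _)
  choose j hj0 hjA using hchoice
  have key : ∀ x y : Fin 4, x ≠ 0 → y ≠ 0 → t3 x = t3 y → x = y := by decide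
  obtain ⟨r1, r2, w, ht1, ht2, hcol⟩ := core (fun r => t3 (j r))
  have hj12 : j r1 = j r2 := key _ _ (hj0 r1) (hj0 r2) hcol
  exact ⟨j r1, hj0 r1, spanEdge a b c w, spanEdge a b c (neg3 w), h1 w, hanti w,
    ⟨spanRidge a b c r1, hjA r1, hsub r1 w ht1⟩,
    ⟨spanRidge a b c r2, hj12 ▸ hjA r2, hsub r2 (neg3 w) ht2⟩⟩

/-- in a 4-set ridge cover of `C^4` whose first set is exactly the
six ridges of a single facet, some other set contains a pair of antipodal edges. -/
theorem facet_set_forces_antipodal_edges (A : Fin 4 → Set (Face 4))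
    (hridges : ∀ i R, R ∈ A i → IsKFace R 2)
    (hcover : ∀ R : Face 4, IsKFace R 2 → ∃ i, R ∈ A i)
    (F : Face 4) (hF : IsKFace F 3)
    (hA0 : A 0 = {R | IsKFace R 2 ∧ Subface R F}) :
    ∃ j : Fin 4, j ≠ 0 ∧ ∃ e e' : Face 4, IsKFace e 1 ∧ Antipodal e e' ∧
      SetContains (A j) e ∧ SetContains (A j) e' := by
  have hex : ∃ i₀ : Fin 4, ∃ b₀ : Bool, F i₀ = some b₀ := by
    by_contra h
    push_neg at h
    have hall : ∀ i, F i = none := by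
      intro i
      cases hFi : F i with
      | none => rfl
      | some v => exact absurd hFi (h i v)
    have : (Finset.univ.filter fun i : Fin 4 => F i = none) = Finset.univ := by
      simp [hall]
    unfold IsKFace at hF
    rw [this] at hF
    simp at hF
  obtain ⟨i₀, b₀, hFi⟩ := hex
  fin_cases i₀
  · exact helper A hcover F hA0 0 1 2 3 b₀ hFi (by decide) (by decide) (by decide)
      (by decide) (by decide)
  · exact helper A hcover F hA0 1 0 2 3 b₀ hFi (by decide) (by decide) (by decide)
      (by decide) (by decide)
  · exact helper A hcover F hA0 2 0 1 3 b₀ hFi (by decide) (by decide) (by decide)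
      (by decide) (by decide)
  · exact helper A hcover F hA0 3 0 1 2 b₀ hFi (by decide) (by decide) (by decide)
      (by decide) (by decide)
end

section
/- For d ≥ 4, there exists a cover of the ridges of the d-cube by 4 + ⌈d/3⌉ sets of ridges such that no set contains a pair of antipodal peaks ((d-3)-faces). -/
open Cube

/-- The fixed-coordinate set of a `(d-k)`-face has `k` elements. -/
lemma fixed_card {d k : ℕ} {R : Face d} (h : IsKFace R k) (hk : k ≤ d) :
    (Finset.univ.filter fun i => R i ≠ none).card = d - k := by
  have h2 := Finset.card_filter_add_card_filter_not
    (s := (Finset.univ : Finset (Fin d))) (p := fun i => R i = none)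
  rw [IsKFace] at h
  simp only [Finset.card_univ, Fintype.card_fin, h, ne_eq] at h2 ⊢
  omega

/-- for `d ≥ 4`, the ridges of `C^d` can be covered by `4 + ⌈d/3⌉`
sets of ridges no one of which contains a pair of antipodal peaks. -/
theorem cover_no_antipodal_peaks (d : ℕ) (hd : 4 ≤ d) :
    ∃ A : Fin (4 + (d + 2) / 3) → Set (Face d),
      (∀ i R, R ∈ A i → IsKFace R (d - 2)) ∧
      (∀ R : Face d, IsKFace R (d - 2) → ∃ i, R ∈ A i) ∧
      (∀ i, ¬ ∃ P P' : Face d, IsKFace P (d - 3) ∧ Antipodal P P' ∧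
        SetContains (A i) P ∧ SetContains (A i) P') := by
  set m := (d + 2) / 3 with hm
  have hm2 : 2 ≤ m := by omega
  -- an injection from coordinates to 2-element subsets of `Fin (m+2)`
  have hcard : d ≤ (m + 2).choose 2 := by
    have h3 : d ≤ 3 * m := by omega
    rw [Nat.choose_two_right]
    have e1 : m + 2 - 1 = m + 1 := by omega
    rw [e1]
    have : 6 * m ≤ (m + 2) * (m + 1) := by nlinarith
    omega
  obtain ⟨e⟩ : Nonempty (Fin d ↪ {s : Finset (Fin (m + 2)) // s.card = 2}) := by
    rw [Function.Embedding.nonempty_iff_card_le]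
    simpa [Fintype.card_finset_len] using hcard
  -- the witness vertices
  set w : Fin (4 + m) → Fin d → Bool := fun k i =>
    decide ((k : ℕ) = 0 ∨ ∃ x : Fin (m + 2), x ∈ (e i).1 ∧ (x : ℕ) + 2 = (k : ℕ)) with hw
  -- key: all four patterns appear on any pair of distinct coordinates
  have key : ∀ i j : Fin d, i ≠ j → ∀ a b : Bool, ∃ k : Fin (4 + m),
      w k i = a ∧ w k j = b := by
    have half : ∀ i j : Fin d, i ≠ j → ∃ k : Fin (4 + m), w k i = true ∧ w k j = false := by
      intro i j hij
      have hne : (e i).1 ≠ (e j).1 := fun h => hij (e.injective (Subtype.ext h))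
      have hnsub : ¬ (e i).1 ⊆ (e j).1 := by
        intro hsub
        exact hne (Finset.eq_of_subset_of_card_le hsub (by rw [(e i).2, (e j).2]))
      obtain ⟨x, hxi, hxj⟩ := Finset.not_subset.mp hnsub
      refine ⟨⟨(x : ℕ) + 2, by omega⟩, ?_, ?_⟩
      · simp only [hw, decide_eq_true_eq]
        exact Or.inr ⟨x, hxi, rfl⟩
      · simp only [hw, decide_eq_false_iff_not]
        rintro (h0 | ⟨y, hy, hyx⟩)
        · omega
        · have : y = x := Fin.ext (by omega)
          exact hxj (this ▸ hy)
    intro i j hij a b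
    match a, b with
    | true, true =>
        refine ⟨⟨0, by omega⟩, ?_, ?_⟩ <;> simp [hw]
    | false, false =>
        refine ⟨⟨1, by omega⟩, ?_, ?_⟩ <;>
          · simp only [hw, decide_eq_false_iff_not]
            rintro (h0 | ⟨y, hy, hyx⟩) <;> omega
    | true, false => exact half i j hij
    | false, true =>
        obtain ⟨k, h1, h2⟩ := half j i (Ne.symm hij)
        exact ⟨k, h2, h1⟩
  refine ⟨fun k => {R | IsKFace R (d - 2) ∧ ∀ i b, R i = some b → w k i = b}, ?_, ?_, ?_⟩
  · intro k R hR
    exact hR.1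
  · -- covering
    intro R hR
    have hfix : (Finset.univ.filter fun i => R i ≠ none).card = 2 := by
      have := fixed_card hR (by omega)
      omega
    obtain ⟨i, j, hij, hset⟩ := Finset.card_eq_two.mp hfix
    have hiR : R i ≠ none := by
      have : i ∈ Finset.univ.filter fun i => R i ≠ none := by rw [hset]; simp
      simpa using this
    have hjR : R j ≠ none := by
      have : j ∈ Finset.univ.filter fun i => R i ≠ none := by rw [hset]; simp
      simpa using this
    obtain ⟨a, ha⟩ := Option.ne_none_iff_exists'.mp hiR
    obtain ⟨b, hb⟩ := Option.ne_none_iff_exists'.mp hjR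
    obtain ⟨k, hki, hkj⟩ := key i j hij a b
    refine ⟨k, hR, ?_⟩
    intro i' b' hi'
    have hmem : i' ∈ Finset.univ.filter fun i => R i ≠ none := by simp [hi']
    rw [hset] at hmem
    rcases Finset.mem_insert.mp hmem with h | h
    · subst h
      rw [ha] at hi'
      cases hi'
      exact hki
    · rw [Finset.mem_singleton] at h
      subst h
      rw [hb] at hi'
      cases hi'
      exact hkj
  · -- no antipodal peaks
    intro k ⟨P, P', hP, hPP', ⟨R, hRA, hPR⟩, ⟨R', hRA', hPR'⟩⟩
    -- fixed sets
    set S : Finset (Fin d) := Finset.univ.filter fun i => R i ≠ none with hS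
    set S' : Finset (Fin d) := Finset.univ.filter fun i => R' i ≠ none with hS'
    set T : Finset (Fin d) := Finset.univ.filter fun i => P i ≠ none with hT
    have hScard : S.card = 2 := by
      have h := fixed_card hRA.1 (show d - 2 ≤ d by omega); rw [← hS] at h; omega
    have hScard' : S'.card = 2 := by
      have h := fixed_card hRA'.1 (show d - 2 ≤ d by omega); rw [← hS'] at h; omega
    have hTcard : T.card = 3 := by
      have h := fixed_card hP (show d - 3 ≤ d by omega); rw [← hT] at h; omega
    have hSsub : S ⊆ T := by
      intro i hi
      simp only [hS, Finset.mem_filter, Finset.mem_univ, true_and] at hi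
      obtain ⟨b, hb⟩ := Option.ne_none_iff_exists'.mp hi
      have := hPR i b hb
      simp [hT, this]
    have hSsub' : S' ⊆ T := by
      intro i hi
      simp only [hS', Finset.mem_filter, Finset.mem_univ, true_and] at hi
      obtain ⟨b, hb⟩ := Option.ne_none_iff_exists'.mp hi
      have hP'i := hPR' i b hb
      have := hPP' i
      rw [hP'i] at this
      simp only [hT, Finset.mem_filter, Finset.mem_univ, true_and]
      intro hnone
      rw [hnone] at this
      simp at this
    have hunion : (S ∪ S').card ≤ 3 := by
      calc (S ∪ S').card ≤ T.card := Finset.card_le_card (Finset.union_subset hSsub hSsub')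
      _ = 3 := hTcard
    have hinter : (S ∩ S').Nonempty := by
      rw [← Finset.card_pos]
      have := Finset.card_union_add_card_inter S S'
      omega
    obtain ⟨i, hi⟩ := hinter
    rw [Finset.mem_inter] at hi
    obtain ⟨hiS, hiS'⟩ := hi
    simp only [hS, hS', Finset.mem_filter, Finset.mem_univ, true_and] at hiS hiS'
    obtain ⟨b, hb⟩ := Option.ne_none_iff_exists'.mp hiS
    obtain ⟨b', hb'⟩ := Option.ne_none_iff_exists'.mp hiS'
    -- values at the common fixed coordinate
    have h1 : w k i = b := hRA.2 i b hb
    have h2 : w k i = b' := hRA'.2 i b' hb'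
    have hPi : P i = some b := hPR i b hb
    have hP'i : P' i = some b' := hPR' i b' hb'
    have := hPP' i
    rw [hP'i, hPi] at this
    simp only [Option.map_some] at this
    cases this
    rw [h1] at h2
    exact absurd h2 (by cases b <;> simp)
end
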